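/- arXiv:1912.04600 — 4 statements merged into one kernel-verified Lean document; each statement's English description precedes it below -/
import Mathlib

section
/- Let n ≥ 5 be an odd integer, p an odd prime number, P = p or 2p, ι = 1 or 2, and let b_1, …, b_{(n−3)/2}, c_1, …, c_{(n−3)/2}, L be integers satisfying: (1) if P is even, then L ≡ ∏_j b_j² ≡ 1 (mod 2); (2) if P ≢ ±1 (mod 9), then L ≡ ∏_j b_j² ≢ 0 (mod 3) and Σ_j b_j^{−1}c_j ≢ 0 (mod 3), where b_j^{−1} denotes an inverse of b_j modulo 3; (3) if p ≡ 2 (mod 3), then L ≡ ∏_j b_j² ≢ 0 (mod p) and Σ_j b_j^{−1}c_j ≢ 0 (mod p), where b_j^{−1} denotes an inverse of b_j modulo p. Then the equation (X³ + P^ι Y³)·∏_{j=1}^{(n−3)/2}(b_j²X² + b_j c_j XY + c_j²Y²) − L Z^n = 0 has solutions other than (0,0,0) over ℝ and over the l-adic field ℚ_l for every prime number l. -/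
/-- The value `F(X,Y,Z) = (X³+aY³) ∏_j (b_j²X² + b_j c_j XY + c_j² Y²) - L Z^n`
in a commutative ring `K`. -/
def EqnHolds {K : Type} [CommRing K] (a L : ℤ) (n : ℕ) {m : ℕ} (b c : Fin m → ℤ)
    (X Y Z : K) : Prop :=
  (X ^ 3 + (a : K) * Y ^ 3) *
      ∏ j : Fin m, ((b j : K) ^ 2 * X ^ 2 + (b j : K) * (c j : K) * X * Y
        + (c j : K) ^ 2 * Y ^ 2)
    = (L : K) * Z ^ n


section helpers
variable {K : Type} [CommRing K]

lemma padic_coe_prod {l : ℕ} [Fact l.Prime] {ι : Type*} (s : Finset ι) (f : ι → ℤ_[l]) :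
    ((∏ i ∈ s, f i : ℤ_[l]) : ℚ_[l]) = ∏ i ∈ s, ((f i : ℚ_[l])) := by
  exact map_prod (PadicInt.Coe.ringHom (p := l)) f s

lemma eqn_L0 (a : ℤ) (n : ℕ) {m : ℕ} (b c : Fin m → ℤ) :
    EqnHolds a 0 n b c (0 : K) 0 1 := by
  simp [EqnHolds]

lemma eqn_b0 (a L : ℤ) {n : ℕ} (hn : n ≠ 0) {m : ℕ} (b c : Fin m → ℤ) {j : Fin m}
    (hj : b j = 0) : EqnHolds a L n b c (1 : K) 0 0 := by
  unfold EqnHolds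
  rw [zero_pow hn, mul_zero]
  refine mul_eq_zero_of_right _ (Finset.prod_eq_zero (Finset.mem_univ j) ?_)
  simp [hj]

lemma eqn_cube (a L : ℤ) {n : ℕ} (hn : n ≠ 0) {m : ℕ} (b c : Fin m → ℤ) {z : K}
    (hz : z ^ 3 + (a : K) = 0) : EqnHolds a L n b c z 1 0 := by
  unfold EqnHolds
  rw [zero_pow hn, mul_zero]
  refine mul_eq_zero_of_left ?_ _
  rw [← hz]; ring

lemma eqn_quad (a L : ℤ) {n : ℕ} (hn : n ≠ 0) {m : ℕ} (b c : Fin m → ℤ) (j : Fin m) {t : K}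
    (ht : t ^ 2 + t + 1 = 0) : EqnHolds a L n b c ((c j : K) * t) ((b j : K)) 0 := by
  unfold EqnHolds
  rw [zero_pow hn, mul_zero]
  refine mul_eq_zero_of_right _ (Finset.prod_eq_zero (Finset.mem_univ j) ?_)
  linear_combination ((b j : K)^2 * (c j : K)^2) * ht

end helpers

lemma norm_int_eq_one {l : ℕ} [Fact l.Prime] {k : ℤ} (h : (k : ZMod l) ≠ 0) :
    ‖(k : ℤ_[l])‖ = 1 := by
  refine le_antisymm (PadicInt.norm_le_one _) ?_
  by_contra hlt
  push_neg at hlt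
  rw [PadicInt.norm_int_lt_one_iff_dvd] at hlt
  exact h ((ZMod.intCast_zmod_eq_zero_iff_dvd k l).2 hlt)

lemma norm_int_lt_one {l : ℕ} [Fact l.Prime] {k : ℤ} (h : (k : ZMod l) = 0) :
    ‖(k : ℤ_[l])‖ < 1 := by
  rw [PadicInt.norm_int_lt_one_iff_dvd]
  exact (ZMod.intCast_zmod_eq_zero_iff_dvd k l).1 h

lemma padic_cube_root {l : ℕ} [Fact l.Prime] (a x₀ : ℤ)
    (h1 : ‖((x₀^3 + a : ℤ) : ℤ_[l])‖ < ‖((3 * x₀^2 : ℤ) : ℤ_[l])‖ ^ 2) :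
    ∃ z : ℤ_[l], z ^ 3 + (a : ℤ_[l]) = 0 := by
  set F : Polynomial ℤ_[l] := Polynomial.X ^ 3 + Polynomial.C (a : ℤ_[l]) with hF
  have he : F.eval (x₀ : ℤ_[l]) = ((x₀^3 + a : ℤ) : ℤ_[l]) := by simp [hF]
  have hd : (Polynomial.derivative F).eval (x₀ : ℤ_[l]) = ((3 * x₀^2 : ℤ) : ℤ_[l]) := by
    simp [hF, Polynomial.derivative_X_pow]; norm_num
  have hnorm : ‖F.eval (x₀ : ℤ_[l])‖ < ‖(Polynomial.derivative F).eval (x₀ : ℤ_[l])‖ ^ 2 := by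
    rw [he, hd]; exact h1
  obtain ⟨z, hz, -⟩ := hensels_lemma hnorm
  exact ⟨z, by simpa [hF] using hz⟩

lemma padic_nth_root_two (n : ℕ) (L B : ℤ) (hn : ¬ (2:ℤ) ∣ n) (hL : ¬(2:ℤ) ∣ L)
    (hd : (2:ℤ) ∣ (L - B)) : ∃ z : ℤ_[2], (L : ℤ_[2]) * z ^ n = (B : ℤ_[2]) := by
  set F : Polynomial ℤ_[2] := Polynomial.C (L : ℤ_[2]) * Polynomial.X ^ n
    - Polynomial.C (B : ℤ_[2]) with hF
  have he : F.eval 1 = ((L - B : ℤ) : ℤ_[2]) := by simp [hF]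
  have hd' : (Polynomial.derivative F).eval 1 = ((L * n : ℤ) : ℤ_[2]) := by
    simp [hF, Polynomial.derivative_X_pow]
  have hnorm : ‖F.eval 1‖ < ‖(Polynomial.derivative F).eval 1‖ ^ 2 := by
    rw [he, hd']
    have h2 : ‖((L * n : ℤ) : ℤ_[2])‖ = 1 := by
      refine norm_int_eq_one ?_
      rw [Ne, ZMod.intCast_zmod_eq_zero_iff_dvd]
      intro h
      rcases (Int.Prime.dvd_mul' Nat.prime_two h) with h' | h'
      · exact hL h'
      · exact hn (by exact_mod_cast h')
    rw [h2, one_pow]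
    exact norm_int_lt_one ((ZMod.intCast_zmod_eq_zero_iff_dvd _ 2).2 hd)
  obtain ⟨z, hz, -⟩ := hensels_lemma hnorm
  refine ⟨z, ?_⟩
  have := hz
  simp [hF, sub_eq_zero] at this
  exact this

lemma padic_omega {l : ℕ} [Fact l.Prime] (x₀ : ℤ)
    (h1 : ((x₀^2 + x₀ + 1 : ℤ) : ZMod l) = 0)
    (h2 : ((2 * x₀ + 1 : ℤ) : ZMod l) ≠ 0) :
    ∃ z : ℤ_[l], z ^ 2 + z + 1 = 0 := by
  set F : Polynomial ℤ_[l] := Polynomial.X ^ 2 + Polynomial.X + 1 with hF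
  have he : F.eval (x₀ : ℤ_[l]) = ((x₀^2 + x₀ + 1 : ℤ) : ℤ_[l]) := by
    simp [hF]
  have hd : (Polynomial.derivative F).eval (x₀ : ℤ_[l]) = ((2 * x₀ + 1 : ℤ) : ℤ_[l]) := by
    simp [hF]; norm_num
  have hnorm : ‖F.eval (x₀ : ℤ_[l])‖ < ‖(Polynomial.derivative F).eval (x₀ : ℤ_[l])‖ ^ 2 := by
    rw [he, hd, norm_int_eq_one h2, one_pow]
    exact norm_int_lt_one h1
  obtain ⟨z, hz, -⟩ := hensels_lemma hnorm
  exact ⟨z, by simpa [hF] using hz⟩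

lemma cube_surj {l : ℕ} [hl : Fact l.Prime] (h2 : l % 3 = 2) (u : ZMod l) :
    ∃ x : ZMod l, x ^ 3 = u := by
  rcases eq_or_ne u 0 with rfl | hu
  · exact ⟨0, by ring⟩
  · have hcop : (Nat.card (ZMod l)ˣ).Coprime 3 := by
      rw [Nat.card_eq_fintype_card, ZMod.card_units_eq_totient,
        Nat.totient_prime hl.out]
      have h1 : ¬ 3 ∣ (l - 1) := by
        have := hl.out.two_le
        intro ⟨k, hk⟩
        omega
      exact Nat.coprime_comm.mp ((Nat.Prime.coprime_iff_not_dvd Nat.prime_three).mpr h1)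
    lift u to (ZMod l)ˣ using isUnit_iff_ne_zero.mpr hu
    obtain ⟨v, hv⟩ := (powCoprime hcop).surjective u
    exact ⟨(v : ZMod l), by rw [← Units.val_pow_eq_pow_val]; exact congrArg _ hv⟩

lemma cube27 : ∀ w : ZMod 27, (w.val % 9 = 1 ∨ w.val % 9 = 8) →
    (∃ x : ZMod 27, x ^ 3 + w = 0) ∧ (∃ x : ZMod 27, x ^ 3 + w ^ 2 = 0) := by decide

lemma omega_exists {l : ℕ} [hl : Fact l.Prime] (h1 : l % 3 = 1) :
    ∃ ω : ZMod l, ω ^ 2 + ω + 1 = 0 := by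
  obtain ⟨g, hg⟩ := IsCyclic.exists_ofOrder_eq_natCard (α := (ZMod l)ˣ)
  have hcard : Nat.card (ZMod l)ˣ = l - 1 := by
    rw [Nat.card_eq_fintype_card, ZMod.card_units_eq_totient, Nat.totient_prime hl.out]
  have h3 : 3 ∣ l - 1 := by
    have := hl.out.two_le
    obtain ⟨k, hk⟩ : ∃ k, l = 3 * k + 1 := ⟨l / 3, by omega⟩
    exact ⟨k, by omega⟩
  obtain ⟨k, hk⟩ := h3
  have hk0 : k ≠ 0 := by have := hl.out.two_le; omega
  set ω' := g ^ k with hω'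
  have hω3 : ω' ^ 3 = 1 := by
    rw [hω', ← pow_mul, mul_comm, ← hk, ← hcard, ← hg, pow_orderOf_eq_one]
  have hω1 : ω' ≠ 1 := by
    intro h
    have := orderOf_dvd_of_pow_eq_one h
    rw [hg, hcard, hk] at this
    have hle := Nat.le_of_dvd (Nat.pos_of_ne_zero hk0) this
    omega
  refine ⟨(ω' : ZMod l), ?_⟩
  have h3' : ((ω' : ZMod l)) ^ 3 = 1 := by
    rw [← Units.val_pow_eq_pow_val, hω3, Units.val_one]
  have hne : ((ω' : ZMod l)) - 1 ≠ 0 := by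
    intro h
    apply hω1
    have : ((ω' : ZMod l)) = 1 := by linear_combination h
    exact Units.ext (by simpa using this)
  have hfac : ((ω' : ZMod l) - 1) * ((ω' : ZMod l) ^ 2 + (ω' : ZMod l) + 1) = 0 := by
    linear_combination h3'
  rcases mul_eq_zero.mp hfac with h | h
  · exact absurd h hne
  · exact h

lemma real_nth_root (n : ℕ) (hn : Odd n) (y : ℝ) : ∃ z : ℝ, z ^ n = y := by
  rcases le_or_gt 0 y with hy | hy
  · refine ⟨y ^ (1 / n : ℝ), ?_⟩
    rw [← Real.rpow_natCast (y ^ (1/n:ℝ)), ← Real.rpow_mul hy]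
    rw [one_div, inv_mul_cancel₀ (by exact_mod_cast hn.pos.ne' : (n:ℝ) ≠ 0), Real.rpow_one]
  · refine ⟨-((-y) ^ (1 / n : ℝ)), ?_⟩
    rw [hn.neg_pow, ← Real.rpow_natCast ((-y) ^ (1/n:ℝ)), ← Real.rpow_mul (by linarith)]
    rw [one_div, inv_mul_cancel₀ (by exact_mod_cast hn.pos.ne' : (n:ℝ) ≠ 0), Real.rpow_one]
    ring
open Polynomial in
lemma eval_zero_derivative_prod {R : Type*} [CommRing R] {ι : Type*} [DecidableEq ι]
    (s : Finset ι) (f : ι → R[X]) :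
    (Polynomial.derivative (∏ i ∈ s, f i)).eval 0 =
      ∑ i ∈ s, ((Polynomial.derivative (f i)).eval 0) * ∏ k ∈ s.erase i, (f k).eval 0 := by
  induction s using Finset.induction_on with
  | empty => simp
  | insert _ _ hx ih =>
      rename_i a s
      rw [Finset.prod_insert hx, Polynomial.derivative_mul, Polynomial.eval_add,
        Polynomial.eval_mul, Polynomial.eval_mul, ih, Finset.sum_insert hx,
        Finset.erase_insert hx, Polynomial.eval_prod, Finset.mul_sum]
      congr 1
      refine Finset.sum_congr rfl fun i hi => ?_
      rw [Finset.erase_insert_of_ne (fun h : a = i => hx (by rwa [← h] at hi)),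
        Finset.prod_insert (fun h => hx (Finset.mem_of_mem_erase h))]
      ring
/-- Hensel step for the big product polynomial. -/
lemma hensel_G {l : ℕ} [Fact l.Prime] {m : ℕ} (b c : Fin m → ℤ) (L a : ℤ)
    (hL : (L : ZMod l) = ∏ j, (b j : ZMod l) ^ 2)
    (hB : (∏ j, (b j : ZMod l) ^ 2) ≠ 0)
    (hS : (∑ j, (b j : ZMod l)⁻¹ * (c j : ZMod l)) ≠ 0) :
    ∃ ε : ℤ_[l],
      ((1 : ℤ_[l]) + (a : ℤ_[l]) * ε ^ 3) *
        ∏ j, ((b j : ℤ_[l]) ^ 2 + (b j : ℤ_[l]) * (c j : ℤ_[l]) * ε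
          + (c j : ℤ_[l]) ^ 2 * ε ^ 2) = (L : ℤ_[l]) := by
  classical
  set F : Polynomial ℤ_[l] :=
    (1 + Polynomial.C (a : ℤ_[l]) * Polynomial.X ^ 3) *
      ∏ j : Fin m, (Polynomial.C ((b j : ℤ_[l]) ^ 2)
        + Polynomial.C ((b j : ℤ_[l]) * (c j : ℤ_[l])) * Polynomial.X
        + Polynomial.C ((c j : ℤ_[l]) ^ 2) * Polynomial.X ^ 2)
      - Polynomial.C (L : ℤ_[l]) with hF
  have heval0 : F.eval 0 = ((∏ j, (b j)^2 - L : ℤ) : ℤ_[l]) := by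
    simp [hF, Polynomial.eval_prod]
  have hderiv0 : (Polynomial.derivative F).eval 0
      = ((∑ j, (b j * c j) * ∏ k ∈ Finset.univ.erase j, (b k)^2 : ℤ) : ℤ_[l]) := by
    simp only [hF, Polynomial.derivative_sub, Polynomial.derivative_C, sub_zero,
      Polynomial.derivative_mul, Polynomial.eval_add, Polynomial.eval_mul]
    rw [eval_zero_derivative_prod]
    simp [Polynomial.eval_prod, Polynomial.derivative_pow]
  have hbj : ∀ j, (b j : ZMod l) ≠ 0 := by
    intro j hj
    exact hB (Finset.prod_eq_zero (Finset.mem_univ j) (by rw [hj]; ring))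
  have hDcast : ((∑ j, (b j * c j) * ∏ k ∈ Finset.univ.erase j, (b k)^2 : ℤ) : ZMod l)
      = (∑ j, (b j : ZMod l)⁻¹ * (c j : ZMod l)) * (∏ j, (b j : ZMod l) ^ 2) := by
    push_cast
    rw [Finset.sum_mul]
    refine Finset.sum_congr rfl fun j _ => ?_
    rw [← Finset.mul_prod_erase Finset.univ (fun k => (b k : ZMod l)^2) (Finset.mem_univ j)]
    have hb2 : ((b j : ZMod l))⁻¹ * ((b j : ZMod l))^2 = (b j : ZMod l) := by
      rw [sq, ← mul_assoc, inv_mul_cancel₀ (hbj j), one_mul]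
    linear_combination (-(c j : ZMod l) * ∏ x ∈ Finset.univ.erase j, (b x : ZMod l)^2) * hb2
  have hDne : ((∑ j, (b j * c j) * ∏ k ∈ Finset.univ.erase j, (b k)^2 : ℤ) : ZMod l) ≠ 0 := by
    rw [hDcast]
    exact mul_ne_zero hS hB
  have hder1 : ‖(Polynomial.derivative F).eval 0‖ = 1 := by
    rw [hderiv0]; exact norm_int_eq_one hDne
  have hval : ‖F.eval 0‖ < ‖(Polynomial.derivative F).eval 0‖ ^ 2 := by
    rw [hder1, one_pow, heval0]
    refine norm_int_lt_one ?_
    push_cast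
    rw [hL]
    ring
  obtain ⟨z, hz, -⟩ := hensels_lemma hval
  refine ⟨z, ?_⟩
  have := hz
  rw [hF] at this
  simp [Polynomial.eval_prod, sub_eq_zero] at this
  convert this using 2
lemma eqn_of_hensel {l : ℕ} [Fact l.Prime] {m : ℕ} (b c : Fin m → ℤ) (L a : ℤ) (n : ℕ)
    {ε : ℤ_[l]}
    (hε : ((1 : ℤ_[l]) + (a : ℤ_[l]) * ε ^ 3) *
        ∏ j, ((b j : ℤ_[l]) ^ 2 + (b j : ℤ_[l]) * (c j : ℤ_[l]) * ε
          + (c j : ℤ_[l]) ^ 2 * ε ^ 2) = (L : ℤ_[l])) :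
    EqnHolds a L n b c (1 : ℚ_[l]) (ε : ℚ_[l]) 1 := by
  unfold EqnHolds
  simp only [one_pow, mul_one]
  have h := congrArg (fun x : ℤ_[l] => (x : ℚ_[l])) hε
  simp only [PadicInt.coe_mul, PadicInt.coe_add, PadicInt.coe_one, PadicInt.coe_pow,
    PadicInt.coe_intCast, padic_coe_prod] at h
  exact h

lemma eqn_cube_padic {l : ℕ} [Fact l.Prime] (a L : ℤ) {n : ℕ} (hn : n ≠ 0) {m : ℕ}
    (b c : Fin m → ℤ) {z : ℤ_[l]} (hz : z ^ 3 + (a : ℤ_[l]) = 0) :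
    EqnHolds a L n b c ((z : ℚ_[l])) 1 0 := by
  refine eqn_cube a L hn b c ?_
  have h := congrArg (fun x : ℤ_[l] => (x : ℚ_[l])) hz
  simpa using h
/-- **Lemma 2.2** (local solubility). -/
theorem local_solubility
    (n : ℕ) (hn5 : 5 ≤ n) (hnodd : Odd n)
    (p : ℕ) (hp : p.Prime) (hpodd : Odd p)
    (P : ℕ) (hP : P = p ∨ P = 2 * p)
    (ι : ℕ) (hι : ι = 1 ∨ ι = 2)
    (b c : Fin ((n - 3) / 2) → ℤ) (L : ℤ)
    -- (1) if `P` is even then `L ≡ ∏_j b_j² ≡ 1 (mod 2)`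
    (h1 : 2 ∣ P → (L : ZMod 2) = ∏ j, (b j : ZMod 2) ^ 2 ∧ (∏ j, (b j : ZMod 2) ^ 2) = 1)
    -- (2) if `P ≢ ±1 (mod 9)` then `L ≡ ∏_j b_j² ≢ 0 (mod 3)` and `∑_j b_j⁻¹ c_j ≢ 0 (mod 3)`
    (h2 : ¬ (P % 9 = 1 ∨ P % 9 = 8) →
      (L : ZMod 3) = ∏ j, (b j : ZMod 3) ^ 2 ∧ (∏ j, (b j : ZMod 3) ^ 2) ≠ 0 ∧
      (∑ j, (b j : ZMod 3)⁻¹ * (c j : ZMod 3)) ≠ 0)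
    -- (3) if `p ≡ 2 (mod 3)` then `L ≡ ∏_j b_j² ≢ 0 (mod p)` and `∑_j b_j⁻¹ c_j ≢ 0 (mod p)`
    (h3 : p % 3 = 2 →
      (L : ZMod p) = ∏ j, (b j : ZMod p) ^ 2 ∧ (∏ j, (b j : ZMod p) ^ 2) ≠ 0 ∧
      (∑ j, (b j : ZMod p)⁻¹ * (c j : ZMod p)) ≠ 0) :
    (∃ X Y Z : ℝ, (X, Y, Z) ≠ (0, 0, 0) ∧ EqnHolds ((P : ℤ) ^ ι) L n b c X Y Z) ∧
    (∀ (l : ℕ) [Fact l.Prime], ∃ X Y Z : ℚ_[l], (X, Y, Z) ≠ (0, 0, 0) ∧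
      EqnHolds ((P : ℤ) ^ ι) L n b c X Y Z) := by
  have hn0 : n ≠ 0 := by omega
  set a : ℤ := (P : ℤ) ^ ι with ha
  set B : ℤ := ∏ j, (b j) ^ 2 with hB
  have hPp : 0 < P := by rcases hP with rfl | rfl <;> have := hp.pos <;> omega
  have hn2 : ¬ (2 : ℤ) ∣ (n : ℤ) := by
    rcases hnodd with ⟨k, hk⟩
    omega
  constructor
  · -- real case
    by_cases hL0 : L = 0
    · subst hL0
      exact ⟨0, 0, 1, by simp, eqn_L0 a n b c⟩
    · obtain ⟨z, hz⟩ := real_nth_root n hnodd ((B : ℝ) / (L : ℝ))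
      refine ⟨1, 0, z, by simp, ?_⟩
      unfold EqnHolds
      rw [hz]
      have hL : (L : ℝ) ≠ 0 := Int.cast_ne_zero.mpr hL0
      field_simp
      push_cast [hB]
      ring
  · intro l instl
    by_cases hL0 : L = 0
    · subst hL0
      exact ⟨0, 0, 1, by simp, eqn_L0 a n b c⟩
    by_cases hb0 : ∃ j, b j = 0
    · obtain ⟨j, hj⟩ := hb0
      exact ⟨1, 0, 0, by simp, eqn_b0 a L hn0 b c hj⟩
    push_neg at hb0
    have hlprime : l.Prime := Fact.out
    rcases (show l % 3 = 0 ∨ l % 3 = 1 ∨ l % 3 = 2 by omega) with hl3 | hl3 | hl3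
    · -- l = 3
      have hl : l = 3 := by
        have h3l : 3 ∣ l := Nat.dvd_of_mod_eq_zero hl3
        exact ((Nat.prime_dvd_prime_iff_eq Nat.prime_three hlprime).mp h3l).symm
      subst hl
      by_cases hP9 : P % 9 = 1 ∨ P % 9 = 8
      · -- cube root mod 27 route
        have hw : ((P : ZMod 27)).val % 9 = P % 9 := by
          rw [ZMod.val_natCast]
          exact Nat.mod_mod_of_dvd P (by norm_num)
        have hx : ∃ x : ZMod 27, x ^ 3 + (P : ZMod 27) ^ ι = 0 := by
          rcases hι with rfl | rfl
          · simpa [pow_one] using (cube27 (P : ZMod 27) (by rw [hw]; exact hP9)).1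
          · exact (cube27 (P : ZMod 27) (by rw [hw]; exact hP9)).2
        obtain ⟨x, hx⟩ := hx
        set x₀ : ℤ := (x.val : ℤ) with hx₀def
        have hxx : ((x.val : ℕ) : ZMod 27) = x := ZMod.natCast_rightInverse x
        have hdvd : (27 : ℤ) ∣ x₀ ^ 3 + a := by
          have : ((x₀ ^ 3 + a : ℤ) : ZMod 27) = 0 := by
            push_cast [hx₀def, hxx, ha]
            exact hx
          exact_mod_cast (ZMod.intCast_zmod_eq_zero_iff_dvd _ 27).mp this
        have hPmod3 : P % 3 ≠ 0 := by
          have : P % 3 = P % 9 % 3 := (Nat.mod_mod_of_dvd P (by norm_num)).symm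
          omega
        have h3x : ¬ (3 : ℤ) ∣ x₀ := by
          intro hdx
          obtain ⟨t, ht⟩ := hdx
          have h27 : (27 : ℤ) ∣ x₀ ^ 3 := ⟨t ^ 3, by rw [ht]; ring⟩
          have h27a : (27 : ℤ) ∣ a := by simpa using dvd_sub hdvd h27
          have h3a : (3 : ℤ) ∣ a := dvd_trans ⟨9, by norm_num⟩ h27a
          have h3P : (3 : ℤ) ∣ (P : ℤ) := by
            rw [ha] at h3a
            exact Int.Prime.dvd_pow' Nat.prime_three h3a
          have : (3 : ℕ) ∣ P := by exact_mod_cast h3P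
          omega
        have hnum : ‖((x₀ ^ 3 + a : ℤ) : ℤ_[3])‖ ≤ ((3 : ℕ) : ℝ) ^ (-(3 : ℕ) : ℤ) :=
          PadicInt.norm_int_le_pow_iff_dvd.mpr (by norm_num at hdvd ⊢; exact_mod_cast hdvd)
        have hx3 : ((x₀ ^ 2 : ℤ) : ZMod 3) ≠ 0 := by
          push_cast
          refine pow_ne_zero _ (fun h => h3x ?_)
          exact_mod_cast (ZMod.intCast_zmod_eq_zero_iff_dvd _ 3).mp h
        have hden : ‖((3 * x₀ ^ 2 : ℤ) : ℤ_[3])‖ = ((3 : ℝ))⁻¹ := by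
          have hsplit : ((3 * x₀ ^ 2 : ℤ) : ℤ_[3]) = ((3 : ℕ) : ℤ_[3]) * ((x₀ ^ 2 : ℤ) : ℤ_[3]) := by
            push_cast
            ring
          rw [hsplit, norm_mul, norm_int_eq_one hx3, mul_one]
          exact_mod_cast PadicInt.norm_p (p := 3)
        have hlt : ‖((x₀ ^ 3 + a : ℤ) : ℤ_[3])‖ < ‖((3 * x₀ ^ 2 : ℤ) : ℤ_[3])‖ ^ 2 := by
          refine lt_of_le_of_lt hnum ?_
          rw [hden]
          norm_num
        obtain ⟨z, hz⟩ := padic_cube_root a x₀ hlt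
        exact ⟨(z : ℚ_[3]), 1, 0, by simp, eqn_cube_padic a L hn0 b c hz⟩
      · -- hensel_G route at 3
        obtain ⟨hA, hBne, hS⟩ := h2 hP9
        obtain ⟨ε, hε⟩ := hensel_G (l := 3) b c L a hA hBne hS
        exact ⟨1, (ε : ℚ_[3]), 1, by simp, eqn_of_hensel b c L a n hε⟩
    · -- l ≡ 1 mod 3 : quadratic factor route
      haveI : NeZero l := ⟨hlprime.pos.ne'⟩
      have hlne3 : l ≠ 3 := by omega
      obtain ⟨ω₀, hω₀⟩ := omega_exists hl3
      set x₀ : ℤ := (ω₀.val : ℤ) with hx₀def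
      have hxx : ((ω₀.val : ℕ) : ZMod l) = ω₀ := ZMod.natCast_rightInverse ω₀
      have h1' : ((x₀ ^ 2 + x₀ + 1 : ℤ) : ZMod l) = 0 := by
        push_cast [hx₀def, hxx]
        exact hω₀
      have h2' : ((2 * x₀ + 1 : ℤ) : ZMod l) ≠ 0 := by
        have hsq : ((2 * x₀ + 1 : ℤ) : ZMod l) ^ 2 = -3 := by
          push_cast [hx₀def, hxx]
          linear_combination 4 * hω₀
        intro h
        rw [h] at hsq
        have h30 : ((3 : ℕ) : ZMod l) = 0 := by push_cast; linear_combination hsq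
        have := (ZMod.natCast_eq_zero_iff 3 l).mp h30
        have := (Nat.prime_dvd_prime_iff_eq hlprime Nat.prime_three).mp this
        exact hlne3 this
      obtain ⟨t, ht⟩ := padic_omega x₀ h1' h2'
      have hj0 : 0 < (n - 3) / 2 := by omega
      set j₀ : Fin ((n - 3) / 2) := ⟨0, hj0⟩ with hj₀def
      have hbne : ((b j₀ : ℚ_[l])) ≠ 0 := Int.cast_ne_zero.mpr (hb0 j₀)
      have ht' : ((t : ℚ_[l])) ^ 2 + (t : ℚ_[l]) + 1 = 0 := by
        have h := congrArg (fun x : ℤ_[l] => (x : ℚ_[l])) ht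
        simpa using h
      refine ⟨(c j₀ : ℚ_[l]) * (t : ℚ_[l]), (b j₀ : ℚ_[l]), 0, ?_,
        eqn_quad a L hn0 b c j₀ ht'⟩
      rintro h
      rw [Prod.mk.injEq, Prod.mk.injEq] at h
      exact hbne h.2.1
    · -- l ≡ 2 mod 3
      by_cases hlP : l ∣ P
      · by_cases hlp : l = p
        · subst hlp
          obtain ⟨hA, hBne, hS⟩ := h3 hl3
          obtain ⟨ε, hε⟩ := hensel_G (l := l) b c L a hA hBne hS
          exact ⟨1, (ε : ℚ_[l]), 1, by simp, eqn_of_hensel b c L a n hε⟩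
        · -- l = 2, P even
          have hl2 : l = 2 := by
            rcases hP with rfl | rfl
            · exact absurd ((Nat.prime_dvd_prime_iff_eq hlprime hp).mp hlP) hlp
            · rcases (Nat.Prime.dvd_mul hlprime).mp hlP with h | h
              · exact (Nat.prime_dvd_prime_iff_eq hlprime Nat.prime_two).mp h
              · exact absurd ((Nat.prime_dvd_prime_iff_eq hlprime hp).mp h) hlp
          subst hl2
          obtain ⟨hLB, hB1⟩ := h1 hlP
          have hLodd : ¬ (2 : ℤ) ∣ L := by
            intro h
            have : (L : ZMod 2) = 0 := (ZMod.intCast_zmod_eq_zero_iff_dvd L 2).mpr h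
            rw [hLB, hB1] at this
            exact one_ne_zero this
          have hdvd2 : (2 : ℤ) ∣ (L - B) := by
            have : ((L - B : ℤ) : ZMod 2) = 0 := by
              push_cast [hB]
              rw [hLB]
              ring
            exact_mod_cast (ZMod.intCast_zmod_eq_zero_iff_dvd _ 2).mp this
          obtain ⟨z, hz⟩ := padic_nth_root_two n L B hn2 hLodd hdvd2
          refine ⟨1, 0, (z : ℚ_[2]), by simp, ?_⟩
          unfold EqnHolds
          have h := congrArg (fun x : ℤ_[2] => (x : ℚ_[2])) hz
          simp only [PadicInt.coe_mul, PadicInt.coe_pow, PadicInt.coe_intCast] at h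
          rw [h]
          push_cast [hB]
          ring
      · -- cube root route, l ∤ P, l ≡ 2 mod 3
        haveI : NeZero l := ⟨hlprime.pos.ne'⟩
        have hlne3 : l ≠ 3 := by omega
        have haZ : ((-a : ℤ) : ZMod l) ≠ 0 := by
          rw [ha]
          push_cast
          refine neg_ne_zero.mpr (pow_ne_zero _ (fun h => hlP ?_))
          exact_mod_cast (ZMod.natCast_eq_zero_iff P l).mp h
        obtain ⟨x, hx⟩ := cube_surj hl3 ((-a : ℤ) : ZMod l)
        have hxne : x ≠ 0 := by
          intro h
          rw [h] at hx
          exact haZ (by rw [← hx]; ring)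
        set x₀ : ℤ := (x.val : ℤ) with hx₀def
        have hxx : ((x.val : ℕ) : ZMod l) = x := ZMod.natCast_rightInverse x
        have hnum : ((x₀ ^ 3 + a : ℤ) : ZMod l) = 0 := by
          push_cast [hx₀def, hxx]
          rw [hx]
          push_cast
          ring
        have hlx : ((x₀ : ℤ) : ZMod l) ≠ 0 := by
          rw [hx₀def]
          push_cast [hxx]
          exact hxne
        have h3Z : ((3 : ℤ) : ZMod l) ≠ 0 := by
          intro h
          have := (ZMod.intCast_zmod_eq_zero_iff_dvd 3 l).mp h
          have h3l : l ∣ 3 := by exact_mod_cast this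
          exact hlne3 ((Nat.prime_dvd_prime_iff_eq hlprime Nat.prime_three).mp h3l)
        have hden : ((3 * x₀ ^ 2 : ℤ) : ZMod l) ≠ 0 := by
          push_cast at h3Z hlx ⊢
          exact mul_ne_zero h3Z (pow_ne_zero _ hlx)
        have hlt : ‖((x₀ ^ 3 + a : ℤ) : ℤ_[l])‖ < ‖((3 * x₀ ^ 2 : ℤ) : ℤ_[l])‖ ^ 2 := by
          rw [norm_int_eq_one hden, one_pow]
          exact norm_int_lt_one hnum
        obtain ⟨z, hz⟩ := padic_cube_root a x₀ hlt
        exact ⟨(z : ℚ_[l]), 1, 0, by simp, eqn_cube_padic a L hn0 b c hz⟩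
end

section
/- Let n ≥ 3 be an odd integer and a, b_1, …, b_{(n−3)/2}, c_1, …, c_{(n−3)/2}, L integers such that: (1) a·b_j³ + c_j³ ≡ 2 (mod 3) is a prime number not dividing a, for every j; (2) every prime factor l of L satisfies l ≡ 2 (mod 3) and v_l(L) < n; (3) gcd(L, b_j c_j) = 1 for every j; (4) for every primitive triple (x,y,z) ∈ ℤ³ satisfying x³ + a y³ = L z^n, there exists a prime divisor l of L such that x ≡ y ≡ 0 (mod l). Then there is no triple (X,Y,Z) ∈ ℤ³ other than (0,0,0) satisfying (X³ + a Y³)·∏_{j=1}^{(n−3)/2}(b_j²X² + b_j c_j XY + c_j²Y²) = L Z^n. -/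
/-- A prime `l ≡ 2 (mod 3)` dividing `u² + uv + v²` divides both `u` and `v`. -/
lemma norm_form_dvd {l : ℕ} (hl : l.Prime) (hl3 : l % 3 = 2) (u v : ℤ)
    (h : (l : ℤ) ∣ u ^ 2 + u * v + v ^ 2) : (l : ℤ) ∣ u ∧ (l : ℤ) ∣ v := by
  haveI : Fact l.Prime := ⟨hl⟩
  have hlne3 : l ≠ 3 := by omega
  have h' : (u : ZMod l) ^ 2 + (u : ZMod l) * (v : ZMod l) + (v : ZMod l) ^ 2 = 0 := by
    have := (ZMod.intCast_zmod_eq_zero_iff_dvd _ l).2 h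
    push_cast at this
    linear_combination this
  suffices hs : (u : ZMod l) = 0 ∧ (v : ZMod l) = 0 by
    exact ⟨(ZMod.intCast_zmod_eq_zero_iff_dvd _ _).1 hs.1,
      (ZMod.intCast_zmod_eq_zero_iff_dvd _ _).1 hs.2⟩
  by_cases hv : (v : ZMod l) = 0
  · refine ⟨?_, hv⟩
    have : (u : ZMod l) ^ 2 = 0 := by rw [hv] at h'; linear_combination h'
    exact pow_eq_zero_iff (n := 2) (by norm_num) |>.1 this
  · exfalso
    set t : ZMod l := (u : ZMod l) * (v : ZMod l)⁻¹ with htdef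
    have hvv : (v : ZMod l) * (v : ZMod l)⁻¹ = 1 := mul_inv_cancel₀ hv
    have ht : t ^ 2 + t + 1 = 0 := by
      rw [htdef]
      linear_combination ((v : ZMod l)⁻¹) ^ 2 * h'
        - ((u : ZMod l) * (v : ZMod l)⁻¹ + 1 + (v : ZMod l) * (v : ZMod l)⁻¹) * hvv
    have ht1 : t ≠ 1 := by
      intro h1
      rw [h1] at ht
      have h3 : ((3 : ℕ) : ZMod l) = 0 := by push_cast; linear_combination ht
      have := (ZMod.natCast_eq_zero_iff 3 l).1 h3
      have := (Nat.prime_dvd_prime_iff_eq hl (by norm_num)).1 this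
      exact hlne3 this
    have ht0 : t ≠ 0 := by
      intro h0
      rw [h0] at ht
      simp at ht
    have ht3 : t ^ 3 = 1 := by linear_combination (t - 1) * ht
    haveI : Fact (Nat.Prime 3) := ⟨by norm_num⟩
    have hord : orderOf t = 3 := orderOf_eq_prime ht3 ht1
    have hdvd : orderOf t ∣ l - 1 :=
      orderOf_dvd_of_pow_eq_one (ZMod.pow_card_sub_one_eq_one ht0)
    rw [hord] at hdvd
    obtain ⟨k, hk⟩ := hdvd
    have := hl.two_le
    omega

/-- no prime divides `1` (in `ℤ`) -/
lemma prime_not_dvd_one' {l : ℕ} (hl : l.Prime) (h : (l : ℤ) ∣ (1 : ℤ)) : False := by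
  have : l ∣ 1 := by exact_mod_cast h
  have := Nat.le_of_dvd one_pos this
  have := hl.two_le
  omega

/-- a prime cannot divide both members of a coprime pair of naturals -/
lemma coprime_no_common_prime {A B p : ℕ} (h : Nat.Coprime A B) (hp : p.Prime)
    (ha : p ∣ A) (hb : p ∣ B) : False :=
  hp.not_dvd_one (h ▸ Nat.dvd_gcd ha hb)

set_option maxHeartbeats 1600000 in
/-- **Lemma 2.3** (global unsolubility). -/
theorem global_unsolubility
    (n : ℕ) (hn3 : 3 ≤ n) (hnodd : Odd n)
    (a : ℤ) (b c : Fin ((n - 3) / 2) → ℤ) (L : ℤ)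
    -- (1) `a b_j³ + c_j³ ≡ 2 (mod 3)` is a prime number not dividing `a`
    (h1 : ∀ j, ∃ q : ℕ, q.Prime ∧ q % 3 = 2 ∧ ¬ (q : ℤ) ∣ a ∧
      (q : ℤ) = a * b j ^ 3 + c j ^ 3)
    -- (2) `L = ∏_{l ≡ 2 (mod 3)} l^{v_l(L)}` with `v_l(L) < n`
    (h2 : ∀ l : ℕ, l.Prime → (l : ℤ) ∣ L → l % 3 = 2 ∧ ¬ (l : ℤ) ^ n ∣ L)
    -- (3) `gcd(L, b_j c_j) = 1`
    (h3 : ∀ j, IsCoprime L (b j * c j))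
    -- (4) every primitive solution of `x³ + a y³ = L z^n` has `x ≡ y ≡ 0 (mod l)` for
    --     some prime divisor `l` of `L`
    (h4 : ∀ x y z : ℤ, Int.gcd x (Int.gcd y z) = 1 →
      x ^ 3 + a * y ^ 3 = L * z ^ n →
      ∃ l : ℕ, l.Prime ∧ (l : ℤ) ∣ L ∧ (l : ℤ) ∣ x ∧ (l : ℤ) ∣ y) :
    ∀ X Y Z : ℤ,
      (X ^ 3 + a * Y ^ 3) *
          ∏ j : Fin ((n - 3) / 2),
            (b j ^ 2 * X ^ 2 + b j * c j * X * Y + c j ^ 2 * Y ^ 2)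
        = L * Z ^ n →
      X = 0 ∧ Y = 0 ∧ Z = 0 := by
  intro X Y Z hXYZ
  have hn0 : n ≠ 0 := by omega
  have hmn : 3 + 2 * ((n - 3) / 2) = n := by
    obtain ⟨k, hk⟩ := hnodd; omega
  have hL0 : L ≠ 0 := by
    intro h0
    obtain ⟨-, hnd⟩ := h2 2 Nat.prime_two (by simp [h0])
    exact hnd (by simp [h0])
  -- main claim : X = 0 ∧ Y = 0
  have main : X = 0 ∧ Y = 0 := by
    by_contra hXY
    -- the gcd of X and Y
    have hg0 : Int.gcd X Y ≠ 0 := by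
      rw [Ne, Int.gcd_eq_zero_iff]
      tauto
    have hgpos : 0 < Int.gcd X Y := Nat.pos_of_ne_zero hg0
    have hgz : ((Int.gcd X Y : ℕ) : ℤ) ≠ 0 := by exact_mod_cast hg0
    obtain ⟨x, hXx⟩ : ((Int.gcd X Y : ℕ) : ℤ) ∣ X := Int.gcd_dvd_left _ _
    obtain ⟨y, hYy⟩ : ((Int.gcd X Y : ℕ) : ℤ) ∣ Y := Int.gcd_dvd_right _ _
    set D : ℕ := Int.gcd X Y with hDdef
    set g : ℤ := (D : ℤ) with hgdef
    have hxy : Int.gcd x y = 1 := by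
      have h := Int.gcd_div_gcd_div_gcd hgpos
      rw [← hDdef, hXx, hYy, Int.mul_ediv_cancel_left _ hgz,
        Int.mul_ediv_cancel_left _ hgz] at h
      exact h
    -- notation for the factors
    set C : ℤ := x ^ 3 + a * y ^ 3 with hCdef
    set Q : Fin ((n - 3) / 2) → ℤ :=
      fun j => b j ^ 2 * x ^ 2 + b j * c j * x * y + c j ^ 2 * y ^ 2 with hQdef
    set P : ℤ := ∏ j, Q j with hPdef
    -- the reduced equation
    have hgpow : g ^ n = g ^ 3 * (g ^ 2) ^ ((n - 3) / 2) := by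
      conv_lhs => rw [← hmn]
      rw [pow_add, pow_mul]
    have heq : g ^ n * (C * P) = L * Z ^ n := by
      rw [← hXYZ, hXx, hYy]
      rw [Finset.prod_congr rfl
        (fun j _ => (by simp only [hQdef]; ring :
          b j ^ 2 * (g * x) ^ 2 + b j * c j * (g * x) * (g * y) + c j ^ 2 * (g * y) ^ 2
            = g ^ 2 * Q j))]
      rw [Finset.prod_mul_distrib, Finset.prod_const, Finset.card_univ, Fintype.card_fin,
        hgpow, hCdef, hPdef]
      ring
    -- helper : no prime divides both x and y
    have hnoprime : ∀ l : ℕ, l.Prime → (l : ℤ) ∣ x → (l : ℤ) ∣ y → False := by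
      intro l hl hlx hly
      have := Int.dvd_gcd hlx hly
      rw [hxy] at this
      exact prime_not_dvd_one' hl (by exact_mod_cast this)
    -- C ≠ 0
    have hC0 : C ≠ 0 := by
      intro h0
      have htriple : Int.gcd x ((Int.gcd y (0 : ℤ) : ℕ) : ℤ) = 1 := by
        rw [Int.gcd_zero_right]
        simpa [Int.gcd_def, Int.natAbs_abs] using hxy
      obtain ⟨l, hlp, hlL, hlx, hly⟩ := h4 x y 0 htriple
        (by rw [← hCdef, h0, zero_pow hn0, mul_zero])
      exact hnoprime l hlp hlx hly
    -- facts about the primes q j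
    have hq : ∀ j, ∃ q : ℕ, q.Prime ∧ q % 3 = 2 ∧ (q : ℤ) = a * b j ^ 3 + c j ^ 3 ∧
        ¬ (q : ℤ) ∣ b j ∧ ¬ (q : ℤ) ∣ c j := by
      intro j
      obtain ⟨q, hqp, hq3, hqa, hqeq⟩ := h1 j
      have hqI : Prime ((q : ℕ) : ℤ) := Nat.prime_iff_prime_int.1 hqp
      have hq0 : ((q : ℕ) : ℤ) ≠ 0 := by exact_mod_cast hqp.ne_zero
      have hqb : ¬ (q : ℤ) ∣ b j := by
        intro hb
        have hc : (q : ℤ) ∣ c j := by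
          have hab : (q : ℤ) ∣ a * b j ^ 3 := Dvd.dvd.mul_left (hb.pow (by norm_num)) a
          have hsum : (q : ℤ) ∣ a * b j ^ 3 + c j ^ 3 := hqeq ▸ dvd_refl _
          have h1' : (q : ℤ) ∣ c j ^ 3 := by
            have he : c j ^ 3 = (a * b j ^ 3 + c j ^ 3) - a * b j ^ 3 := by ring
            rw [he]; exact dvd_sub hsum hab
          exact hqI.dvd_of_dvd_pow h1'
        -- then q^2 divides q
        obtain ⟨s, hs⟩ := hb
        obtain ⟨t, ht⟩ := hc
        have hsq : (q : ℤ) ^ 2 ∣ a * b j ^ 3 + c j ^ 3 :=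
          ⟨a * ((q : ℤ) * s ^ 3) + (q : ℤ) * t ^ 3, by rw [hs, ht]; ring⟩
        rw [← hqeq] at hsq
        obtain ⟨w, hw⟩ := hsq
        have h1w : (1 : ℤ) = (q : ℤ) * w := by
          have := mul_left_cancel₀ hq0 (by linear_combination hw :
            (q : ℤ) * 1 = (q : ℤ) * ((q : ℤ) * w))
          exact this
        exact prime_not_dvd_one' hqp ⟨w, h1w⟩
      have hqc : ¬ (q : ℤ) ∣ c j := by
        intro hc
        have hab : (q : ℤ) ∣ a * b j ^ 3 := by
          have h1' : (q : ℤ) ∣ c j ^ 3 := hc.pow (by norm_num)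
          have hsum : (q : ℤ) ∣ a * b j ^ 3 + c j ^ 3 := hqeq ▸ dvd_refl _
          have he : a * b j ^ 3 = (a * b j ^ 3 + c j ^ 3) - c j ^ 3 := by ring
          rw [he]; exact dvd_sub hsum h1'
        rcases hqI.dvd_mul.1 hab with h | h
        · exact hqa h
        · exact hqb (hqI.dvd_of_dvd_pow h)
      exact ⟨q, hqp, hq3, hqeq, hqb, hqc⟩
    -- the quadratic forms are nonzero
    have hQ0 : ∀ j, Q j ≠ 0 := by
      intro j h0
      obtain ⟨q, hqp, hq3, hqeq, hqb, hqc⟩ := hq j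
      simp only [hQdef] at h0
      have hquad : (b j * x) ^ 2 + (b j * x) * (c j * y) + (c j * y) ^ 2 = 0 := by
        linear_combination h0
      have hv2 : (c j * y) ^ 2 = 0 := by
        nlinarith [sq_nonneg (2 * (b j * x) + c j * y), sq_nonneg (c j * y)]
      have hv : c j * y = 0 := pow_eq_zero_iff (n := 2) (by norm_num) |>.1 hv2
      have hu : b j * x = 0 := by
        have : (b j * x) ^ 2 = 0 := by rw [hv] at hquad; linear_combination hquad
        exact pow_eq_zero_iff (n := 2) (by norm_num) |>.1 this
      have hb0 : b j ≠ 0 := by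
        intro hb
        have hqc3 : (q : ℤ) = c j ^ 3 := by rw [hqeq, hb]; ring
        have hqn : q = (c j).natAbs ^ 3 := by
          have := congrArg Int.natAbs hqc3
          simpa [Int.natAbs_pow, Int.natAbs_natCast] using this
        rcases hqp.eq_one_or_self_of_dvd (c j).natAbs ⟨(c j).natAbs ^ 2, by rw [hqn]; ring⟩
          with h | h
        · rw [h] at hqn; simp at hqn; exact hqp.one_lt.ne' hqn
        · rw [h] at hqn
          have hq2 := hqp.two_le
          have hcube : q ^ 3 = q * q * q := by ring
          nlinarith [hqn, hq2, hcube]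
      have hx0 : x = 0 := by
        rcases mul_eq_zero.1 hu with h | h
        · exact absurd h hb0
        · exact h
      have hc0 : c j ≠ 0 := fun hcc => hqc (hcc ▸ dvd_zero _)
      have hy0 : y = 0 := by
        rcases mul_eq_zero.1 hv with h | h
        · exact absurd h hc0
        · exact h
      rw [hx0, hy0] at hxy
      simp at hxy
    have hP0 : P ≠ 0 := by
      rw [hPdef]
      exact Finset.prod_ne_zero_iff.2 fun j _ => hQ0 j
    -- q j does not divide Q j
    have hqQ : ∀ j, ∀ q : ℕ, q.Prime → q % 3 = 2 → ¬ (q : ℤ) ∣ b j → ¬ (q : ℤ) ∣ c j →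
        ¬ (q : ℤ) ∣ Q j := by
      intro j q hqp hq3 hqb hqc hdvd
      have hqI : Prime ((q : ℕ) : ℤ) := Nat.prime_iff_prime_int.1 hqp
      have hd : (q : ℤ) ∣ (b j * x) ^ 2 + (b j * x) * (c j * y) + (c j * y) ^ 2 := by
        have he : (b j * x) ^ 2 + (b j * x) * (c j * y) + (c j * y) ^ 2 = Q j := by
          simp only [hQdef]; ring
        rw [he]; exact hdvd
      obtain ⟨hu, hv⟩ := norm_form_dvd hqp hq3 _ _ hd
      have hx : (q : ℤ) ∣ x := (hqI.dvd_mul.1 hu).resolve_left hqb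
      have hy : (q : ℤ) ∣ y := (hqI.dvd_mul.1 hv).resolve_left hqc
      exact hnoprime q hqp hx hy
    -- primes dividing L do not divide any Q j
    have hlQ : ∀ l : ℕ, l.Prime → (l : ℤ) ∣ L → ∀ j, ¬ (l : ℤ) ∣ Q j := by
      intro l hlp hlL j hdvd
      obtain ⟨hl3, -⟩ := h2 l hlp hlL
      have hlb : ¬ (l : ℤ) ∣ b j := by
        intro hbb
        have : IsUnit ((l : ℕ) : ℤ) := (h3 j).isUnit_of_dvd' hlL (hbb.mul_right (c j))
        rcases Int.isUnit_iff.1 this with h | h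
        · exact prime_not_dvd_one' hlp (h ▸ dvd_refl _)
        · have h0 : (0 : ℤ) ≤ -1 := h ▸ Int.natCast_nonneg l
          omega
      have hlc : ¬ (l : ℤ) ∣ c j := by
        intro hcc
        have : IsUnit ((l : ℕ) : ℤ) := (h3 j).isUnit_of_dvd' hlL (hcc.mul_left (b j))
        rcases Int.isUnit_iff.1 this with h | h
        · exact prime_not_dvd_one' hlp (h ▸ dvd_refl _)
        · have h0 : (0 : ℤ) ≤ -1 := h ▸ Int.natCast_nonneg l
          omega
      exact hqQ j l hlp hl3 hlb hlc hdvd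
    -- C is coprime to each Q j
    have hCQ : ∀ j, IsCoprime C (Q j) := by
      intro j
      rw [Int.isCoprime_iff_gcd_eq_one]
      by_contra hne
      obtain ⟨p, hpp, hpd⟩ := Nat.exists_prime_and_dvd hne
      have hpI : Prime ((p : ℕ) : ℤ) := Nat.prime_iff_prime_int.1 hpp
      have hpC : (p : ℤ) ∣ C :=
        dvd_trans (Int.natCast_dvd_natCast.2 hpd) (Int.gcd_dvd_left _ _)
      have hpQ : (p : ℤ) ∣ Q j :=
        dvd_trans (Int.natCast_dvd_natCast.2 hpd) (Int.gcd_dvd_right _ _)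
      obtain ⟨q, hqp, hq3, hqeq, hqb, hqc⟩ := hq j
      have hid : (q : ℤ) * y ^ 3 = b j ^ 3 * C - (b j * x - c j * y) * Q j := by
        rw [hqeq, hCdef]; simp only [hQdef]; ring
      have hdq : (p : ℤ) ∣ (q : ℤ) * y ^ 3 := by
        rw [hid]
        exact dvd_sub (hpC.mul_left _) (hpQ.mul_left _)
      rcases hpI.dvd_mul.1 hdq with h | h
      · -- p = q
        have hpq : p = q := by
          have : p ∣ q := by exact_mod_cast h
          exact (Nat.prime_dvd_prime_iff_eq hpp hqp).1 this
        exact hqQ j q hqp hq3 hqb hqc (hpq ▸ hpQ)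
      · have hy : (p : ℤ) ∣ y := hpI.dvd_of_dvd_pow h
        have hx : (p : ℤ) ∣ x := by
          have hx3 : (p : ℤ) ∣ x ^ 3 := by
            have he : x ^ 3 = C - a * y ^ 3 := by rw [hCdef]; ring
            rw [he]
            exact dvd_sub hpC ((hy.pow (by norm_num)).mul_left a)
          exact hpI.dvd_of_dvd_pow hx3
        exact hnoprime p hpp hx hy
    have hCP : IsCoprime C P := by
      rw [hPdef]
      exact IsCoprime.prod_right fun j _ => hCQ j
    have hLP : IsCoprime L P := by
      rw [Int.isCoprime_iff_gcd_eq_one]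
      by_contra hne
      obtain ⟨p, hpp, hpd⟩ := Nat.exists_prime_and_dvd hne
      have hpI : Prime ((p : ℕ) : ℤ) := Nat.prime_iff_prime_int.1 hpp
      have hpL : (p : ℤ) ∣ L :=
        dvd_trans (Int.natCast_dvd_natCast.2 hpd) (Int.gcd_dvd_left _ _)
      have hpP : (p : ℤ) ∣ P :=
        dvd_trans (Int.natCast_dvd_natCast.2 hpd) (Int.gcd_dvd_right _ _)
      rw [hPdef] at hpP
      obtain ⟨j, -, hj⟩ := (hpI.dvd_finset_prod_iff _).1 hpP
      exact hlQ p hpp hpL j hj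
    -- Z ≠ 0
    have hZ0 : Z ≠ 0 := by
      intro h0
      rw [h0, zero_pow hn0, mul_zero] at heq
      rcases mul_eq_zero.1 heq with h | h
      · exact pow_ne_zero n hgz h
      · rcases mul_eq_zero.1 h with h' | h'
        · exact hC0 h'
        · exact hP0 h'
    -- pass to natural numbers
    have hCN0 : C.natAbs ≠ 0 := Int.natAbs_ne_zero.2 hC0
    have hPN0 : P.natAbs ≠ 0 := Int.natAbs_ne_zero.2 hP0
    have hLN0 : L.natAbs ≠ 0 := Int.natAbs_ne_zero.2 hL0
    have hZN0 : Z.natAbs ≠ 0 := Int.natAbs_ne_zero.2 hZ0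
    have hD0 : D ≠ 0 := hg0
    have heqN : D ^ n * (C.natAbs * P.natAbs) = L.natAbs * Z.natAbs ^ n := by
      have h := congrArg Int.natAbs heq
      rw [hgdef] at h
      simpa [Int.natAbs_mul, Int.natAbs_pow, Int.natAbs_natCast] using h
    -- coprimality in ℕ
    have hLPN : Nat.Coprime L.natAbs P.natAbs := by
      have := Int.isCoprime_iff_gcd_eq_one.1 hLP
      rwa [Int.gcd_def] at this
    -- valuation of L is < n at primes dividing L
    have hvL : ∀ p : ℕ, p.Prime → p ∣ L.natAbs → L.natAbs.factorization p < n := by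
      intro p hpp hpL
      by_contra hge
      push_neg at hge
      have h1' : p ^ n ∣ L.natAbs := dvd_trans (pow_dvd_pow p hge) (Nat.ordProj_dvd L.natAbs p)
      have h2' : ((p : ℕ) : ℤ) ^ n ∣ L := by
        rw [← Int.natAbs_dvd_natAbs, Int.natAbs_pow, Int.natAbs_natCast]
        exact h1'
      have hpLint : ((p : ℕ) : ℤ) ∣ L := by
        rw [← Int.natAbs_dvd_natAbs, Int.natAbs_natCast]
        exact hpL
      exact (h2 p hpp hpLint).2 h2'
    -- pointwise factorization identity
    have hfac : ∀ p : ℕ,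
        n * D.factorization p + (C.natAbs.factorization p + P.natAbs.factorization p)
          = L.natAbs.factorization p + n * Z.natAbs.factorization p := by
      intro p
      have e1 : (D ^ n * (C.natAbs * P.natAbs)).factorization p
          = n * D.factorization p + (C.natAbs.factorization p + P.natAbs.factorization p) := by
        rw [Nat.factorization_mul (pow_ne_zero _ hD0) (mul_ne_zero hCN0 hPN0),
          Nat.factorization_mul hCN0 hPN0, Nat.factorization_pow]
        simp
      have e2 : (L.natAbs * Z.natAbs ^ n).factorization p
          = L.natAbs.factorization p + n * Z.natAbs.factorization p := by
        rw [Nat.factorization_mul hLN0 (pow_ne_zero _ hZN0), Nat.factorization_pow]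
        simp
      rw [← e1, ← e2, heqN]
    -- D divides Z.natAbs
    have hDZ : D ∣ Z.natAbs := by
      rw [← Nat.factorization_le_iff_dvd hD0 hZN0, Finsupp.le_def]
      intro p
      by_cases hpp : p.Prime
      · have hf := hfac p
        by_cases hpL : p ∣ L.natAbs
        · have hkP : P.natAbs.factorization p = 0 :=
            Nat.factorization_eq_zero_of_not_dvd
              (fun hcc => coprime_no_common_prime hLPN hpp hpL hcc)
          have hkL : L.natAbs.factorization p < n := hvL p hpp hpL
          rcases Nat.lt_or_ge (D.factorization p) (Z.natAbs.factorization p + 1) with h | h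
          · omega
          · exfalso
            have hmul : n * (Z.natAbs.factorization p + 1) ≤ n * D.factorization p :=
              Nat.mul_le_mul_left n h
            rw [Nat.mul_add, Nat.mul_one] at hmul
            omega
        · have hkL : L.natAbs.factorization p = 0 := Nat.factorization_eq_zero_of_not_dvd hpL
          have hle : n * D.factorization p ≤ n * Z.natAbs.factorization p := by omega
          exact Nat.le_of_mul_le_mul_left hle (by omega)
      · rw [Nat.factorization_eq_zero_of_not_prime D hpp]
        exact Nat.zero_le _
    -- cancel g^n
    obtain ⟨z', hz'⟩ : g ∣ Z := by
      rw [hgdef, Int.natCast_dvd]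
      exact hDZ
    have heq2 : C * P = L * z' ^ n := by
      have h' : g ^ n * (C * P) = g ^ n * (L * z' ^ n) := by
        rw [heq, hz', mul_pow]; ring
      exact mul_left_cancel₀ (pow_ne_zero n (by rw [hgdef]; exact hgz)) h'
    have hz'0 : z' ≠ 0 := by
      intro h0
      rw [h0, mul_zero] at hz'
      exact hZ0 hz'
    have hzN0 : z'.natAbs ≠ 0 := Int.natAbs_ne_zero.2 hz'0
    have heq2N : C.natAbs * P.natAbs = L.natAbs * z'.natAbs ^ n := by
      have h := congrArg Int.natAbs heq2
      simpa [Int.natAbs_mul, Int.natAbs_pow] using h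
    -- L divides C
    have hLC : L ∣ C := by
      rw [← Int.natAbs_dvd_natAbs]
      rw [← Nat.factorization_le_iff_dvd hLN0 hCN0, Finsupp.le_def]
      intro p
      by_cases hpp : p.Prime
      · have e1 : (C.natAbs * P.natAbs).factorization p
            = C.natAbs.factorization p + P.natAbs.factorization p := by
          rw [Nat.factorization_mul hCN0 hPN0]; simp
        have e2 : (L.natAbs * z'.natAbs ^ n).factorization p
            = L.natAbs.factorization p + n * z'.natAbs.factorization p := by
          rw [Nat.factorization_mul hLN0 (pow_ne_zero _ hzN0), Nat.factorization_pow]; simp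
        have hf : C.natAbs.factorization p + P.natAbs.factorization p
            = L.natAbs.factorization p + n * z'.natAbs.factorization p := by
          rw [← e1, ← e2, heq2N]
        by_cases hpL : p ∣ L.natAbs
        · have hkP : P.natAbs.factorization p = 0 :=
            Nat.factorization_eq_zero_of_not_dvd
              (fun hcc => coprime_no_common_prime hLPN hpp hpL hcc)
          omega
        · rw [Nat.factorization_eq_zero_of_not_dvd hpL]
          exact Nat.zero_le _
      · rw [Nat.factorization_eq_zero_of_not_prime L.natAbs hpp]
        exact Nat.zero_le _
    obtain ⟨C₁, hC₁⟩ := hLC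
    have heq3 : C₁ * P = z' ^ n := by
      have h' : L * (C₁ * P) = L * z' ^ n := by
        rw [← heq2, hC₁]; ring
      exact mul_left_cancel₀ hL0 h'
    have hC₁P : IsCoprime C₁ P :=
      hCP.of_isCoprime_of_dvd_left ⟨L, by rw [hC₁]; ring⟩
    obtain ⟨z₁, hz₁⟩ := Int.eq_pow_of_mul_eq_pow_odd_left hC₁P hnodd heq3
    -- apply h4 to (x, y, z₁)
    have hCform : x ^ 3 + a * y ^ 3 = L * z₁ ^ n := by
      rw [← hCdef, hC₁, hz₁]
    have htriple : Int.gcd x ((Int.gcd y z₁ : ℕ) : ℤ) = 1 := by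
      have h1' : Nat.gcd x.natAbs y.natAbs = 1 := hxy
      have h2' : Nat.gcd x.natAbs (Nat.gcd y.natAbs z₁.natAbs) = 1 :=
        Nat.Coprime.coprime_dvd_right (Nat.gcd_dvd_left _ _) h1'
      rw [Int.gcd_def, Int.natAbs_natCast]
      exact h2'
    obtain ⟨l, hlp, hlL, hlx, hly⟩ := h4 x y z₁ htriple hCform
    exact hnoprime l hlp hlx hly
  -- conclude
  obtain ⟨hX, hY⟩ := main
  refine ⟨hX, hY, ?_⟩
  rw [hX, hY] at hXYZ
  have h0 : (0 : ℤ) = L * Z ^ n := by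
    rw [← hXYZ]; ring
  rcases mul_eq_zero.1 h0.symm with h | h
  · exact absurd h hL0
  · exact pow_eq_zero_iff hn0 |>.1 h
end

section
/- The element 4 + 2·7^{1/3} + 7^{2/3} of the ring ℤ[7^{1/3}] is the fundamental unit of the cubic field ℚ(7^{1/3}): it is a unit of the ring of integers ℤ[7^{1/3}], it is greater than 1, and it generates the unit group of ℤ[7^{1/3}] modulo the torsion subgroup {±1}. -/
/-- The real cube root of a natural number. -/
noncomputable def cbrt (P : ℕ) : ℝ := (P : ℝ) ^ ((1 : ℝ) / 3)

/-- `u` belongs to the order `ℤ[P^{1/3}]` of `ℚ(P^{1/3})`. -/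
def InOrder (P : ℕ) (u : ℝ) : Prop :=
  ∃ x y z : ℤ, u = (x : ℝ) + (y : ℝ) * cbrt P + (z : ℝ) * (cbrt P) ^ 2

/-- `u` is a unit of the order `ℤ[P^{1/3}]`. -/
def IsUnitOfOrder (P : ℕ) (u : ℝ) : Prop :=
  InOrder P u ∧ ∃ v : ℝ, InOrder P v ∧ u * v = 1

/-- `ε` is the fundamental unit of `ℚ(P^{1/3})` (whose ring of integers is `ℤ[P^{1/3}]`
since `P ≢ ±1 mod 9`): the smallest unit greater than `1`, equivalently the generator
greater than `1` of the unit group modulo `±1`. -/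
def IsFundamentalUnit (P : ℕ) (ε : ℝ) : Prop :=
  IsUnitOfOrder P ε ∧ 1 < ε ∧ ∀ u : ℝ, IsUnitOfOrder P u → 1 < u → ε ≤ u

lemma t_cube : (cbrt 7) ^ 3 = 7 := by
  have : ((7:ℕ):ℝ) = (7:ℝ) := by norm_num
  rw [cbrt, this, ← Real.rpow_natCast ((7:ℝ) ^ ((1:ℝ)/3)) 3, ← Real.rpow_mul (by norm_num)]
  norm_num

lemma t_pos : 0 < cbrt 7 := Real.rpow_pos_of_pos (by norm_num) _

lemma t_gt : 1.91 < cbrt 7 := by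
  nlinarith [t_cube, t_pos, sq_nonneg (cbrt 7 - 1.91), sq_nonneg (cbrt 7 + 1.91)]

lemma t_lt : cbrt 7 < 1.92 := by
  nlinarith [t_cube, t_pos, sq_nonneg (cbrt 7 - 1.92), sq_nonneg (cbrt 7 + 1.92)]

lemma descent_aux : ∀ n : ℕ, ∀ a b c : ℤ, a.natAbs + b.natAbs + c.natAbs ≤ n →
    a ^ 3 + 7 * b ^ 3 + 49 * c ^ 3 - 21 * a * b * c = 0 → a = 0 ∧ b = 0 ∧ c = 0 := by
  intro n
  induction n using Nat.strong_induction_on with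
  | _ n ih =>
    intro a b c hle h
    have hp : Prime (7 : ℤ) := by norm_num
    have h7a : (7:ℤ) ∣ a := by
      refine hp.dvd_of_dvd_pow (n := 3) ⟨-b^3 - 7*c^3 + 3*a*b*c, by linarith⟩
    obtain ⟨a1, rfl⟩ := h7a
    have h2 : b ^ 3 + 7 * c ^ 3 + 49 * a1 ^ 3 - 21 * b * c * a1 = 0 := by
      have : 7 * (b ^ 3 + 7 * c ^ 3 + 49 * a1 ^ 3 - 21 * b * c * a1) = 0 := by linarith
      omega
    have h7b : (7:ℤ) ∣ b := by
      refine hp.dvd_of_dvd_pow (n := 3) ⟨-c^3 - 7*a1^3 + 3*b*c*a1, by linarith⟩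
    obtain ⟨b1, rfl⟩ := h7b
    have h3 : c ^ 3 + 7 * a1 ^ 3 + 49 * b1 ^ 3 - 21 * c * a1 * b1 = 0 := by
      have : 7 * (c ^ 3 + 7 * a1 ^ 3 + 49 * b1 ^ 3 - 21 * c * a1 * b1) = 0 := by linarith
      omega
    have h7c : (7:ℤ) ∣ c := by
      refine hp.dvd_of_dvd_pow (n := 3) ⟨-a1^3 - 7*b1^3 + 3*c*a1*b1, by linarith⟩
    obtain ⟨c1, rfl⟩ := h7c
    have h4 : a1 ^ 3 + 7 * b1 ^ 3 + 49 * c1 ^ 3 - 21 * a1 * b1 * c1 = 0 := by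
      have : 7 * (a1 ^ 3 + 7 * b1 ^ 3 + 49 * c1 ^ 3 - 21 * a1 * b1 * c1) = 0 := by linarith
      omega
    by_cases h0 : a1 = 0 ∧ b1 = 0 ∧ c1 = 0
    · refine ⟨by simp [h0.1], by simp [h0.2.1], by simp [h0.2.2]⟩
    · have hs : a1.natAbs + b1.natAbs + c1.natAbs < n := by
        have e1 : (7*a1).natAbs = 7 * a1.natAbs := by simp [Int.natAbs_mul]
        have e2 : (7*b1).natAbs = 7 * b1.natAbs := by simp [Int.natAbs_mul]
        have e3 : (7*c1).natAbs = 7 * c1.natAbs := by simp [Int.natAbs_mul]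
        have hpos : 0 < a1.natAbs + b1.natAbs + c1.natAbs := by
          rcases Nat.eq_zero_or_pos (a1.natAbs + b1.natAbs + c1.natAbs) with h | h
          · exfalso; apply h0
            refine ⟨Int.natAbs_eq_zero.mp ?_, Int.natAbs_eq_zero.mp ?_, Int.natAbs_eq_zero.mp ?_⟩ <;> omega
          · exact h
        omega
      obtain ⟨e1, e2, e3⟩ := ih _ hs a1 b1 c1 le_rfl h4
      exact ⟨by simp [e1], by simp [e2], by simp [e3]⟩

lemma descent (a b c : ℤ) (h : a ^ 3 + 7 * b ^ 3 + 49 * c ^ 3 - 21 * a * b * c = 0) :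
    a = 0 ∧ b = 0 ∧ c = 0 :=
  descent_aux _ a b c le_rfl h

lemma indep (a b c : ℤ) (h : (a:ℝ) + (b:ℝ) * cbrt 7 + (c:ℝ) * (cbrt 7) ^ 2 = 0) :
    a = 0 ∧ b = 0 ∧ c = 0 := by
  set t := cbrt 7 with ht
  apply descent
  have key : ((a ^ 3 + 7 * b ^ 3 + 49 * c ^ 3 - 21 * a * b * c : ℤ) : ℝ) = 0 := by
    push_cast
    linear_combination (((a:ℝ)^2 - 7*b*c) + (7*(c:ℝ)^2 - a*b) * t + ((b:ℝ)^2 - a*c) * t^2) * h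
      - ((b:ℝ)*((b:ℝ)^2 - a*c) + (c:ℝ)*(7*(c:ℝ)^2 - a*b) + (c:ℝ)*((b:ℝ)^2 - a*c)*t) * t_cube
  exact_mod_cast key

lemma inOrder_mul {u v : ℝ} (hu : InOrder 7 u) (hv : InOrder 7 v) : InOrder 7 (u * v) := by
  obtain ⟨x, y, z, rfl⟩ := hu
  obtain ⟨p, q, r, rfl⟩ := hv
  exact ⟨x*p + 7*(y*r + z*q), x*q + y*p + 7*z*r, x*r + y*q + z*p, by
    push_cast
    linear_combination (((y:ℝ)*r + (z:ℝ)*q) + (z:ℝ)*r*cbrt 7) * t_cube⟩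

lemma unit_mul {u v : ℝ} (hu : IsUnitOfOrder 7 u) (hv : IsUnitOfOrder 7 v) :
    IsUnitOfOrder 7 (u * v) := by
  obtain ⟨hu1, u', hu2, hu3⟩ := hu
  obtain ⟨hv1, v', hv2, hv3⟩ := hv
  refine ⟨inOrder_mul hu1 hv1, u' * v', inOrder_mul hu2 hv2, ?_⟩
  nlinarith [hu3, hv3]

lemma unit_neg {u : ℝ} (hu : IsUnitOfOrder 7 u) : IsUnitOfOrder 7 (-u) := by
  obtain ⟨⟨x, y, z, rfl⟩, v, hv, hv2⟩ := hu
  obtain ⟨p, q, r, rfl⟩ := hv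
  exact ⟨⟨-x, -y, -z, by push_cast; ring⟩, -((p:ℝ) + q*cbrt 7 + r*(cbrt 7)^2),
    ⟨-p, -q, -r, by push_cast; ring⟩, by linarith [hv2]⟩

noncomputable def E : ℝ := 4 + 2 * cbrt 7 + (cbrt 7) ^ 2

lemma E_inv : E * (2 - cbrt 7) = 1 := by
  rw [E]; linear_combination (-1 : ℝ) * t_cube

lemma E_unit : IsUnitOfOrder 7 E := by
  refine ⟨⟨4, 2, 1, by push_cast; rw [E]; ring⟩, 2 - cbrt 7, ⟨2, -1, 0, by push_cast; ring⟩, E_inv⟩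

lemma E_gt_one : 1 < E := by rw [E]; nlinarith [t_gt]

lemma E_lt : E < 11.53 := by rw [E]; nlinarith [t_lt, t_gt]

lemma E_gt : 11.4 < E := by rw [E]; nlinarith [t_gt]

/-- If `u = x + y t + z t²` is a unit, the norm of `(x,y,z)` is `±1`. -/
lemma unit_norm {u : ℝ} (x y z : ℤ)
    (hu : u = (x:ℝ) + (y:ℝ) * cbrt 7 + (z:ℝ) * (cbrt 7) ^ 2)
    (h : IsUnitOfOrder 7 u) :
    x ^ 3 + 7 * y ^ 3 + 49 * z ^ 3 - 21 * x * y * z = 1 ∨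
    x ^ 3 + 7 * y ^ 3 + 49 * z ^ 3 - 21 * x * y * z = -1 := by
  obtain ⟨-, v, ⟨p, q, r, rfl⟩, huv⟩ := h
  subst hu
  set t := cbrt 7 with ht
  -- product components
  have hprod : ((x*p + 7*(y*r + z*q) - 1 : ℤ) : ℝ) + ((x*q + y*p + 7*z*r : ℤ) : ℝ) * t
      + ((x*r + y*q + z*p : ℤ) : ℝ) * t ^ 2 = 0 := by
    push_cast
    linear_combination huv - (((y:ℝ)*r + (z:ℝ)*q) + (z:ℝ)*r*t) * t_cube
  obtain ⟨e1, e2, e3⟩ := indep _ _ _ hprod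
  have hX : x*p + 7*(y*r + z*q) = 1 := by omega
  have hmul : (x ^ 3 + 7 * y ^ 3 + 49 * z ^ 3 - 21 * x * y * z) *
      (p ^ 3 + 7 * q ^ 3 + 49 * r ^ 3 - 21 * p * q * r) = 1 := by
    have key : (x ^ 3 + 7 * y ^ 3 + 49 * z ^ 3 - 21 * x * y * z) *
        (p ^ 3 + 7 * q ^ 3 + 49 * r ^ 3 - 21 * p * q * r) =
        (x*p + 7*(y*r + z*q)) ^ 3 + 7 * (x*q + y*p + 7*z*r) ^ 3
          + 49 * (x*r + y*q + z*p) ^ 3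
          - 21 * (x*p + 7*(y*r + z*q)) * (x*q + y*p + 7*z*r) * (x*r + y*q + z*p) := by
      ring
    rw [key, hX, e2, e3]; ring
  exact Int.isUnit_iff.mp (IsUnit.of_mul_eq_one _ hmul)

set_option maxHeartbeats 2000000 in
lemma no_small {u : ℝ} (h : IsUnitOfOrder 7 u) (h1 : 1 < u) (h2 : u < E) : False := by
  obtain ⟨x, y, z, hu⟩ := h.1
  set t := cbrt 7 with ht
  have hN := unit_norm x y z hu h
  have ht1 := t_gt
  have ht2 := t_lt
  have hE2 : u < 11.53 := lt_trans h2 E_lt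
  obtain ⟨A, B, w, hNA, hdisc, hBdef, hydef, hzdef⟩ :
      ∃ A B w : ℝ, u * A = ((x^3 + 7*y^3 + 49*z^3 - 21*x*y*z : ℤ) : ℝ) ∧
        4*A - B^2 = 3*w^2 ∧ B = 3*(x:ℝ) - u ∧
        6*(y:ℝ)*t = 2*u - B + 3*w ∧ 6*(z:ℝ)*t^2 = 2*u - B - 3*w := by
    refine ⟨((x:ℝ)^2 - 7*(y:ℝ)*(z:ℝ)) + (7*(z:ℝ)^2 - (x:ℝ)*(y:ℝ))*t + ((y:ℝ)^2 - (x:ℝ)*(z:ℝ))*t^2,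
      2*(x:ℝ) - (y:ℝ)*t - (z:ℝ)*t^2, (y:ℝ)*t - (z:ℝ)*t^2, ?_, ?_, ?_, ?_, ?_⟩
    · rw [hu]; push_cast
      linear_combination ((y:ℝ)*((y:ℝ)^2-(x:ℝ)*(z:ℝ)) + (z:ℝ)*(7*(z:ℝ)^2-(x:ℝ)*(y:ℝ))
        + (z:ℝ)*((y:ℝ)^2-(x:ℝ)*(z:ℝ))*t) * t_cube
    · linear_combination (4*(y:ℝ)*(z:ℝ) - 4*(z:ℝ)^2*t) * t_cube
    · rw [hu]; ring
    · rw [hu]; ring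
    · rw [hu]; ring
  -- the norm must be +1
  have hN1 : x^3 + 7*y^3 + 49*z^3 - 21*x*y*z = 1 := by
    rcases hN with hN | hN
    · exact hN
    · exfalso
      rw [hN] at hNA
      norm_num at hNA
      nlinarith [sq_nonneg B, sq_nonneg w]
  rw [hN1] at hNA
  norm_num at hNA
  have hApos : 0 < A := by nlinarith
  have hAlt : A < 1 := by nlinarith
  have hB2 : B^2 < 4 := by nlinarith [sq_nonneg w]
  have hw2 : w^2 < 4/3 := by nlinarith
  have hBl : B < 2 := by nlinarith [sq_nonneg (B-2)]
  have hBg : -2 < B := by nlinarith [sq_nonneg (B+2)]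
  have hwl : w < 1.16 := by nlinarith [sq_nonneg (w-1.16)]
  have hwg : -1.16 < w := by nlinarith [sq_nonneg (w+1.16)]
  have hx0 : 0 ≤ x := by
    have hr : (-1:ℝ) < 3*(x:ℝ) := by nlinarith
    have : (-1:ℤ) < 3*x := by exact_mod_cast hr
    omega
  have hx4 : x ≤ 4 := by
    have hr : 3*(x:ℝ) < 15 := by nlinarith
    have : 3*x < (15:ℤ) := by exact_mod_cast hr
    omega
  have hy0 : 0 ≤ y := by
    have hr : (-1:ℝ) < (y:ℝ) := by nlinarith
    have : (-1:ℤ) < y := by exact_mod_cast hr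
    omega
  have hy2 : y ≤ 2 := by
    have hr : (y:ℝ) < 3 := by nlinarith
    have : y < (3:ℤ) := by exact_mod_cast hr
    omega
  have hz0 : 0 ≤ z := by
    have hr : (-1:ℝ) < (z:ℝ) := by nlinarith
    have : (-1:ℤ) < z := by exact_mod_cast hr
    omega
  have hz1 : z ≤ 1 := by
    have hr : (z:ℝ) < 2 := by nlinarith
    have : z < (2:ℤ) := by exact_mod_cast hr
    omega
  have hEd : E = 4 + 2*t + t^2 := rfl
  rw [hEd] at h2
  clear hNA hdisc hBdef hydef hzdef hApos hAlt hB2 hw2 hBl hBg hwl hwg hN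
  interval_cases x <;> interval_cases y <;> interval_cases z <;>
    norm_num at hN1 <;> norm_num at hu <;> nlinarith [ht1, ht2, h1, h2]

lemma Einv_unit : IsUnitOfOrder 7 (2 - cbrt 7) :=
  ⟨⟨2, -1, 0, by push_cast; ring⟩, E, E_unit.1, by rw [mul_comm]; exact E_inv⟩

lemma classify_aux : ∀ n : ℕ, ∀ u : ℝ, IsUnitOfOrder 7 u → 1 < u → u < E ^ n →
    ∃ m : ℕ, u = E ^ m := by
  intro n
  induction n with
  | zero => intro u hu h1 h2; norm_num at h2; linarith
  | succ n ih =>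
    intro u hu h1 h2
    rcases lt_trichotomy u E with hlt | heq | hgt
    · exact (no_small hu h1 hlt).elim
    · exact ⟨1, by simpa using heq⟩
    · have h2t : 0 < 2 - cbrt 7 := by linarith [t_lt]
      have hu' : IsUnitOfOrder 7 (u * (2 - cbrt 7)) := unit_mul hu Einv_unit
      have h1' : 1 < u * (2 - cbrt 7) := by
        calc (1:ℝ) = E * (2 - cbrt 7) := E_inv.symm
        _ < u * (2 - cbrt 7) := by exact mul_lt_mul_of_pos_right hgt h2t
      have h2' : u * (2 - cbrt 7) < E ^ n := by
        have h3 : u * (2 - cbrt 7) < E ^ (n+1) * (2 - cbrt 7) :=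
          mul_lt_mul_of_pos_right h2 h2t
        calc u * (2 - cbrt 7) < E ^ (n+1) * (2 - cbrt 7) := h3
        _ = E ^ n * (E * (2 - cbrt 7)) := by ring
        _ = E ^ n := by rw [E_inv, mul_one]
      obtain ⟨m, hm⟩ := ih _ hu' h1' h2'
      refine ⟨m + 1, ?_⟩
      have h4 : u * ((2 - cbrt 7) * E) = E ^ m * E := by rw [← mul_assoc, hm]
      rw [mul_comm (2 - cbrt 7) E, E_inv, mul_one] at h4
      rw [h4]; ring

lemma classify_gt_one {u : ℝ} (hu : IsUnitOfOrder 7 u) (h1 : 1 < u) : ∃ m : ℕ, u = E ^ m := by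
  obtain ⟨n, hn⟩ := pow_unbounded_of_one_lt u E_gt_one
  exact classify_aux n u hu h1 hn

lemma classify_pos {u : ℝ} (hu : IsUnitOfOrder 7 u) (h0 : 0 < u) : ∃ k : ℤ, u = E ^ k := by
  rcases lt_trichotomy u 1 with hlt | heq | hgt
  · obtain ⟨hio, v, hv, huv⟩ := hu
    have hvpos : 1 < v := by
      nlinarith [huv, h0, hlt]
    have hvu : IsUnitOfOrder 7 v := ⟨hv, u, hio, by rw [mul_comm]; exact huv⟩
    obtain ⟨m, hm⟩ := classify_gt_one hvu hvpos
    refine ⟨-(m:ℤ), ?_⟩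
    have : u = v⁻¹ := eq_inv_of_mul_eq_one_left huv
    rw [this, hm, zpow_neg, zpow_natCast]
  · exact ⟨0, by simp [heq]⟩
  · obtain ⟨m, hm⟩ := classify_gt_one hu hgt
    exact ⟨(m:ℤ), by rw [hm, zpow_natCast]⟩

lemma classify {u : ℝ} (hu : IsUnitOfOrder 7 u) :
    ∃ k : ℤ, u = E ^ k ∨ u = -E ^ k := by
  have hne : u ≠ 0 := by
    obtain ⟨-, v, -, huv⟩ := hu
    intro h0; rw [h0, zero_mul] at huv; norm_num at huv
  rcases hne.lt_or_gt with hneg | hpos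
  · obtain ⟨k, hk⟩ := classify_pos (unit_neg hu) (by linarith)
    exact ⟨k, Or.inr (by linarith [hk])⟩
  · obtain ⟨k, hk⟩ := classify_pos hu hpos
    exact ⟨k, Or.inl hk⟩

/-- `4 + 2·7^{1/3} + 7^{2/3}` is the fundamental unit of `ℚ(7^{1/3})`: it is a unit of
the ring of integers `ℤ[7^{1/3}]`, it is greater than `1`, and every unit of
`ℤ[7^{1/3}]` is of the form `± ε^k` with `k ∈ ℤ`. -/
theorem fundamental_unit_seven :
    IsUnitOfOrder 7 (4 + 2 * cbrt 7 + (cbrt 7) ^ 2) ∧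
    1 < 4 + 2 * cbrt 7 + (cbrt 7) ^ 2 ∧
    ∀ u : ℝ, IsUnitOfOrder 7 u →
      ∃ k : ℤ, u = (4 + 2 * cbrt 7 + (cbrt 7) ^ 2) ^ k ∨
        u = -(4 + 2 * cbrt 7 + (cbrt 7) ^ 2) ^ k := by
  refine ⟨E_unit, E_gt_one, fun u hu => ?_⟩
  exact classify hu
end

section
/- The element 4 + 3·3^{1/3} + 2·3^{2/3} of the ring ℤ[3^{1/3}] is the fundamental unit of the cubic field ℚ(3^{1/3}): it is a unit of the ring of integers ℤ[3^{1/3}], it is greater than 1, and it generates the unit group of ℤ[3^{1/3}] modulo the torsion subgroup {±1}. -/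
namespace FundThree

noncomputable abbrev t : ℝ := cbrt 3

lemma t_pos : 0 < t := Real.rpow_pos_of_pos (by norm_num) _

lemma t_cube : t ^ 3 = 3 := by
  have h : ((3:ℕ):ℝ) = (3:ℝ) := by norm_num
  rw [t, cbrt, h, ← Real.rpow_natCast ((3:ℝ) ^ ((1:ℝ)/3)) 3, ← Real.rpow_mul (by norm_num)]
  norm_num

lemma t_lb : 1.442 < t := by
  nlinarith [t_cube, t_pos, sq_nonneg (t - 1.442), sq_nonneg (t + 1.442)]

lemma t_ub : t < 1.443 := by
  nlinarith [t_cube, t_pos, sq_nonneg (t - 1.443), sq_nonneg (t + 1.443)]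

lemma t2_lb : 2.079 < t ^ 2 := by nlinarith [t_lb, t_pos]

lemma t2_ub : t ^ 2 < 2.0823 := by nlinarith [t_ub, t_pos, t_lb]

/-- norm-form descent -/
lemma norm_zero_descent : ∀ n : ℕ, ∀ a b c : ℤ, a.natAbs + b.natAbs + c.natAbs ≤ n →
    a^3 + 3*b^3 + 9*c^3 - 9*a*b*c = 0 → a = 0 ∧ b = 0 ∧ c = 0 := by
  intro n
  induction n using Nat.strong_induction_on with
  | _ n ih =>
    intro a b c hle h
    have h3a : (3:ℤ) ∣ a := by
      refine Int.prime_three.dvd_of_dvd_pow (n := 3) ⟨3*a*b*c - b^3 - 3*c^3, by linarith⟩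
    obtain ⟨a', rfl⟩ := h3a
    have h3b : (3:ℤ) ∣ b := by
      have k : 3*(b^3 - 3*(3*a'*b*c - 3*a'^3 - c^3)) = 0 := by linear_combination h
      exact Int.prime_three.dvd_of_dvd_pow (n := 3) ⟨3*a'*b*c - 3*a'^3 - c^3, by linarith⟩
    obtain ⟨b', rfl⟩ := h3b
    have h3c : (3:ℤ) ∣ c := by
      have k : 9*(c^3 - 3*(3*a'*b'*c - a'^3 - 3*b'^3)) = 0 := by linear_combination h
      exact Int.prime_three.dvd_of_dvd_pow (n := 3) ⟨3*a'*b'*c - a'^3 - 3*b'^3, by linarith⟩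
    obtain ⟨c', rfl⟩ := h3c
    have h' : a'^3 + 3*b'^3 + 9*c'^3 - 9*a'*b'*c' = 0 := by
      have k : 27*(a'^3 + 3*b'^3 + 9*c'^3 - 9*a'*b'*c') = 0 := by linear_combination h
      linarith
    have habs : (3*a').natAbs = 3 * a'.natAbs := by omega
    have hbabs : (3*b').natAbs = 3 * b'.natAbs := by omega
    have hcabs : (3*c').natAbs = 3 * c'.natAbs := by omega
    rcases Nat.eq_zero_or_pos (a'.natAbs + b'.natAbs + c'.natAbs) with hz | hp
    · refine ⟨?_, ?_, ?_⟩ <;> omega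
    · have hm : a'.natAbs + b'.natAbs + c'.natAbs < n := by omega
      obtain ⟨e1, e2, e3⟩ := ih _ hm a' b' c' le_rfl h'
      exact ⟨by simp [e1], by simp [e2], by simp [e3]⟩

lemma adj_identity (a b c : ℝ) :
    (a + b * t + c * t^2) *
      ((a^2 - 3*b*c) + (3*c^2 - a*b) * t + (b^2 - a*c) * t^2)
    = a^3 + 3*b^3 + 9*c^3 - 9*a*b*c := by
  linear_combination ((b^3 + 3*c^3 - 2*a*b*c) + (b^2*c - a*c^2) * t) * t_cube

lemma adj_nonneg_form (a b c : ℝ) :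
    (a^2 - 3*b*c) + (3*c^2 - a*b) * t + (b^2 - a*c) * t^2
    = (a - (b * t + c * t^2)/2)^2 + 3/4 * (b * t - c * t^2)^2 := by
  linear_combination (b*c - c^2 * t) * t_cube

lemma indep (a b c : ℤ) (h : (a:ℝ) + b * t + c * t^2 = 0) :
    a = 0 ∧ b = 0 ∧ c = 0 := by
  have hN : ((a:ℝ)^3 + 3*(b:ℝ)^3 + 9*(c:ℝ)^3 - 9*a*b*c) = 0 := by
    rw [← adj_identity, h, zero_mul]
  have h2 : (a^3 + 3*b^3 + 9*c^3 - 9*a*b*c : ℤ) = 0 := by exact_mod_cast hN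
  exact norm_zero_descent _ a b c le_rfl h2

lemma mul_repr (x y z a b c : ℝ) :
    (x + y*t + z*t^2) * (a + b*t + c*t^2)
    = (x*a + 3*(y*c + z*b)) + (x*b + y*a + 3*(z*c))*t + (x*c + y*b + z*a)*t^2 := by
  linear_combination ((y*c + z*b) + z*c*t) * t_cube

lemma norm_mul_int (x y z a b c : ℤ) :
    (x^3 + 3*y^3 + 9*z^3 - 9*x*y*z) * (a^3 + 3*b^3 + 9*c^3 - 9*a*b*c)
    = (x*a + 3*(y*c + z*b))^3 + 3*(x*b + y*a + 3*(z*c))^3 + 9*(x*c + y*b + z*a)^3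
      - 9*(x*a + 3*(y*c + z*b))*(x*b + y*a + 3*(z*c))*(x*c + y*b + z*a) := by ring

noncomputable abbrev eps : ℝ := 4 + 3 * cbrt 3 + 2 * (cbrt 3) ^ 2

lemma eps_inv : eps * (-2 + t^2) = 1 := by
  show (4 + 3*t + 2*t^2) * (-2 + t^2) = 1
  linear_combination (3 + 2*t) * t_cube

lemma eps_gt_one : 1 < eps := by
  have := t_lb; have := t2_lb
  show (1:ℝ) < 4 + 3*t + 2*t^2
  nlinarith

lemma eps_ub : eps < 12.494 := by
  have := t_ub; have := t2_ub
  show 4 + 3*t + 2*t^2 < 12.494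
  nlinarith

lemma unit_mul {u v : ℝ} (hu : IsUnitOfOrder 3 u) (hv : IsUnitOfOrder 3 v) :
    IsUnitOfOrder 3 (u * v) := by
  obtain ⟨⟨x, y, z, hxyz⟩, u', ⟨x', y', z', hx'⟩, hu'⟩ := hu
  obtain ⟨⟨a, b, c, habc⟩, v', ⟨a', b', c', ha'⟩, hv'⟩ := hv
  refine ⟨⟨x*a + 3*(y*c + z*b), x*b + y*a + 3*(z*c), x*c + y*b + z*a, ?_⟩,
    u' * v', ⟨x'*a' + 3*(y'*c' + z'*b'), x'*b' + y'*a' + 3*(z'*c'), x'*c' + y'*b' + z'*a', ?_⟩, ?_⟩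
  · rw [hxyz, habc]; push_cast; exact mul_repr _ _ _ _ _ _
  · rw [hx', ha']; push_cast; exact mul_repr _ _ _ _ _ _
  · calc u * v * (u' * v') = (u * u') * (v * v') := by ring
      _ = 1 := by rw [hu', hv', one_mul]

lemma unit_one : IsUnitOfOrder 3 1 :=
  ⟨⟨1, 0, 0, by norm_num⟩, 1, ⟨1, 0, 0, by norm_num⟩, by norm_num⟩

lemma unit_pow {u : ℝ} (hu : IsUnitOfOrder 3 u) : ∀ n : ℕ, IsUnitOfOrder 3 (u ^ n) := by
  intro n
  induction n with
  | zero => simpa using unit_one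
  | succ n ih => rw [pow_succ]; exact unit_mul ih hu

lemma eps_unit : IsUnitOfOrder 3 eps := by
  refine ⟨⟨4, 3, 2, by push_cast; ring⟩, -2 + t^2, ⟨-2, 0, 1, by push_cast; ring⟩, eps_inv⟩

lemma eps_pos : (0:ℝ) < eps := lt_trans one_pos eps_gt_one

lemma unit_zpow : ∀ k : ℤ, IsUnitOfOrder 3 (eps ^ k) := by
  intro k
  have hw : IsUnitOfOrder 3 (-2 + t^2) :=
    ⟨⟨-2, 0, 1, by push_cast; ring⟩, eps, ⟨4, 3, 2, by push_cast; ring⟩, by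
      rw [mul_comm]; exact eps_inv⟩
  have hinv : eps⁻¹ = -2 + t^2 := inv_eq_of_mul_eq_one_right eps_inv
  cases k with
  | ofNat n => rw [Int.ofNat_eq_coe, zpow_natCast]; exact unit_pow eps_unit n
  | negSucc n =>
      rw [zpow_negSucc, ← inv_pow, hinv]
      exact unit_pow hw (n + 1)

set_option maxHeartbeats 1000000 in
lemma no_unit_between (u : ℝ) (hu : IsUnitOfOrder 3 u) (h1 : 1 < u) (h2 : u < eps) : False := by
  obtain ⟨⟨x, y, z, hxyz⟩, v, ⟨a, b, c, habc⟩, huv⟩ := hu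
  -- the product of the two representations is 1
  have hprod : ((x*a + 3*(y*c + z*b) - 1 : ℤ) : ℝ) + ((x*b + y*a + 3*(z*c) : ℤ) : ℝ) * t
      + ((x*c + y*b + z*a : ℤ) : ℝ) * t^2 = 0 := by
    have := huv
    rw [hxyz, habc] at this
    rw [mul_repr] at this
    push_cast
    linarith [this]
  obtain ⟨e1, e2, e3⟩ := indep _ _ _ hprod
  have e1' : x*a + 3*(y*c + z*b) = 1 := by omega
  -- norms multiply to 1
  have hNmul : (x^3 + 3*y^3 + 9*z^3 - 9*x*y*z) * (a^3 + 3*b^3 + 9*c^3 - 9*a*b*c) = 1 := by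
    rw [norm_mul_int, e1', e2, e3]; ring
  have hN1 : (x^3 + 3*y^3 + 9*z^3 - 9*x*y*z) = 1 ∨ (x^3 + 3*y^3 + 9*z^3 - 9*x*y*z) = -1 :=
    Int.isUnit_iff.mp (IsUnit.of_mul_eq_one _ hNmul)
  -- real identity : u * Q = N
  have hQid : u * (((x:ℝ) - ((y:ℝ)*t + (z:ℝ)*t^2)/2)^2 + 3/4 * ((y:ℝ)*t - (z:ℝ)*t^2)^2)
      = ((x^3 + 3*y^3 + 9*z^3 - 9*x*y*z : ℤ) : ℝ) := by
    rw [hxyz, ← adj_nonneg_form, adj_identity]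
    push_cast
    ring
  have hQ0 : 0 ≤ ((x:ℝ) - ((y:ℝ)*t + (z:ℝ)*t^2)/2)^2 + 3/4 * ((y:ℝ)*t - (z:ℝ)*t^2)^2 := by positivity
  have hN : (x^3 + 3*y^3 + 9*z^3 - 9*x*y*z) = 1 := by
    rcases hN1 with h | h
    · exact h
    · exfalso
      rw [h] at hQid
      push_cast at hQid
      nlinarith [hQid, hQ0, h1]
  rw [hN] at hQid
  push_cast at hQid
  -- numeric bounds
  have hupos : (0:ℝ) < u := lt_trans one_pos h1
  have hQlt : ((x:ℝ) - ((y:ℝ)*t + (z:ℝ)*t^2)/2)^2 + 3/4 * ((y:ℝ)*t - (z:ℝ)*t^2)^2 < 1 := by nlinarith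
  have hF1 : ((x:ℝ) - ((y:ℝ)*t + (z:ℝ)*t^2)/2)^2 < 1 := by nlinarith [sq_nonneg ((y:ℝ)*t - (z:ℝ)*t^2)]
  have hF2 : ((y:ℝ)*t - (z:ℝ)*t^2)^2 < 4/3 := by nlinarith [sq_nonneg ((x:ℝ) - ((y:ℝ)*t + (z:ℝ)*t^2)/2)]
  have hueq : u = (x:ℝ) + (y:ℝ)*t + (z:ℝ)*t^2 := by rw [hxyz]
  have huub : u < 12.494 := lt_trans h2 eps_ub
  have hXub : (x:ℝ) - ((y:ℝ)*t + (z:ℝ)*t^2)/2 < 1 := by nlinarith [sq_nonneg ((x:ℝ) - ((y:ℝ)*t + (z:ℝ)*t^2)/2 - 1)]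
  have hXlb : -1 < (x:ℝ) - ((y:ℝ)*t + (z:ℝ)*t^2)/2 := by nlinarith [sq_nonneg ((x:ℝ) - ((y:ℝ)*t + (z:ℝ)*t^2)/2 + 1)]
  have hSub : (y:ℝ)*t + (z:ℝ)*t^2 < 9 := by linarith
  have hSlb : 0 < (y:ℝ)*t + (z:ℝ)*t^2 := by linarith
  have hDub : (y:ℝ)*t - (z:ℝ)*t^2 < 1.1548 := by nlinarith
  have hDlb : -1.1548 < (y:ℝ)*t - (z:ℝ)*t^2 := by nlinarith
  have hYt : (y:ℝ)*t < 5.08 := by linarith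
  have hYt' : -0.58 < (y:ℝ)*t := by linarith
  have hZt : (z:ℝ)*t^2 < 5.08 := by linarith
  have hZt' : -0.58 < (z:ℝ)*t^2 := by linarith
  have hXr1 : (x:ℝ) < 6 := by linarith
  have hXr2 : -1 < (x:ℝ) := by linarith
  have hYr1 : (y:ℝ) < 4 := by nlinarith [t_lb, t_ub]
  have hYr2 : -1 < (y:ℝ) := by nlinarith [t_lb, t_ub]
  have hZr1 : (z:ℝ) < 3 := by nlinarith [t2_lb, t2_ub]
  have hZr2 : -1 < (z:ℝ) := by nlinarith [t2_lb, t2_ub]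
  have hx1 : x < 6 := by exact_mod_cast hXr1
  have hx2 : -1 < x := by exact_mod_cast hXr2
  have hy1 : y < 4 := by exact_mod_cast hYr1
  have hy2 : -1 < y := by exact_mod_cast hYr2
  have hz1 : z < 3 := by exact_mod_cast hZr1
  have hz2 : -1 < z := by exact_mod_cast hZr2
  have h2' : u < 4 + 3*t + 2*t^2 := h2
  have hN' : x*(x*x) + 3*(y*(y*y)) + 9*(z*(z*z)) - 9*(x*(y*z)) = 1 := by linear_combination hN
  clear hQid hQlt hF1 hF2 hXub hXlb hSub hSlb hDub hDlb hYt hYt' hZt hZt' hXr1 hXr2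
  clear hYr1 hYr2 hZr1 hZr2 hprod e1 e2 e3 e1' hNmul hN1 hN hQ0 huv hxyz habc huub hupos h2
  interval_cases x <;> interval_cases y <;> interval_cases z <;>
    first
      | omega
      | (push_cast at hueq; linarith [h1, h2', t_lb, t_pos])

end FundThree

/-- `4 + 3·3^{1/3} + 2·3^{2/3}` is the fundamental unit of `ℚ(3^{1/3})`: it is a unit of
the ring of integers `ℤ[3^{1/3}]`, it is greater than `1`, and every unit of
`ℤ[3^{1/3}]` is of the form `± ε^k` with `k ∈ ℤ`. -/
theorem fundamental_unit_three :
    IsUnitOfOrder 3 (4 + 3 * cbrt 3 + 2 * (cbrt 3) ^ 2) ∧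
    1 < 4 + 3 * cbrt 3 + 2 * (cbrt 3) ^ 2 ∧
    ∀ u : ℝ, IsUnitOfOrder 3 u →
      ∃ k : ℤ, u = (4 + 3 * cbrt 3 + 2 * (cbrt 3) ^ 2) ^ k ∨
        u = -(4 + 3 * cbrt 3 + 2 * (cbrt 3) ^ 2) ^ k := by
  open FundThree in
  refine ⟨eps_unit, eps_gt_one, ?_⟩
  intro u hu
  have main : ∀ w : ℝ, IsUnitOfOrder 3 w → 0 < w → ∃ k : ℤ, w = FundThree.eps ^ k := by
    intro w hw hwpos
    obtain ⟨n, hn1, hn2⟩ := exists_mem_Ico_zpow hwpos FundThree.eps_gt_one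
    have hepspow : (0:ℝ) < FundThree.eps ^ n := zpow_pos FundThree.eps_pos n
    have hwn : IsUnitOfOrder 3 (w * (FundThree.eps ^ n)⁻¹) := by
      have : (FundThree.eps ^ n)⁻¹ = FundThree.eps ^ (-n) := by rw [zpow_neg]
      rw [this]
      exact FundThree.unit_mul hw (FundThree.unit_zpow (-n))
    have h1 : 1 ≤ w * (FundThree.eps ^ n)⁻¹ := by
      rw [le_mul_inv_iff₀ hepspow, one_mul]
      exact hn1
    have h2 : w * (FundThree.eps ^ n)⁻¹ < FundThree.eps := by
      rw [mul_inv_lt_iff₀ hepspow]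
      calc w < FundThree.eps ^ (n + 1) := hn2
        _ = FundThree.eps * FundThree.eps ^ n := by rw [zpow_add_one₀ (ne_of_gt FundThree.eps_pos)]; ring
    rcases eq_or_lt_of_le h1 with heq | hlt
    · refine ⟨n, ?_⟩
      field_simp at heq
      linarith [heq]
    · exact (FundThree.no_unit_between _ hwn hlt h2).elim
  have hune : u ≠ 0 := by
    obtain ⟨_, v, _, huv⟩ := hu
    exact left_ne_zero_of_mul_eq_one huv
  rcases lt_or_gt_of_ne hune with hneg | hpos
  · have hnu : IsUnitOfOrder 3 (-u) := by
      obtain ⟨⟨x, y, z, hxyz⟩, v, ⟨a, b, c, habc⟩, huv⟩ := hu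
      exact ⟨⟨-x, -y, -z, by rw [hxyz]; push_cast; ring⟩, -v,
        ⟨-a, -b, -c, by rw [habc]; push_cast; ring⟩, by rw [neg_mul_neg]; exact huv⟩
    obtain ⟨k, hk⟩ := main (-u) hnu (by linarith)
    exact ⟨k, Or.inr (by linarith [hk])⟩
  · obtain ⟨k, hk⟩ := main u hu hpos
    exact ⟨k, Or.inl hk⟩
end
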